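/- arXiv:2502.06514 — 4 statements merged into one kernel-verified Lean document; each statement's English description precedes it below -/
import Mathlib

section
/- Fix N ∈ ℕ, 0 ≤ s ≤ T, j ∈ {1,…,N}, σ > 0 and L ≥ 0. Let a^i, c^{i,k} : [s,T] → ℝ (i,k ∈ {1,…,N}) be measurable functions with |a^i(r)| ≤ L and |c^{i,k}(r)| ≤ L for all r, and let d¹,…,d^N : [s,T] → ℝ be continuous functions satisfying, for all t ∈ [s,T], d^i(t) = σ·1_{i=j} + ∫_s^t ( a^i(r) d^i(r) + N^{−1} ∑_{k=1}^N c^{i,k}(r) d^k(r) ) dr. Then there exists a constant C depending only on σ, L and T (not on N, s or j) such that sup_{t∈[s,T]} N^{−1} ∑_{i=1}^N |d^i(t)| ≤ C/N, sup_{t∈[s,T]} |d^j(t)| ≤ C, and sup_{t∈[s,T]} |d^i(t)| ≤ C/N for every i ≠ j. -/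
open MeasureTheory Set Real

lemma gronwall_int {f : ℝ → ℝ} {s T A B : ℝ} (hsT : s ≤ T) (hA : 0 ≤ A) (hB : 0 ≤ B)
    (hf : ContinuousOn f (Set.Icc s T))
    (hf0 : ∀ t ∈ Set.Icc s T, 0 ≤ f t)
    (h : ∀ t ∈ Set.Icc s T, f t ≤ A + B * ∫ r in s..t, f r) :
    ∀ t ∈ Set.Icc s T, f t ≤ A * Real.exp (B * (T - s)) := by
  set p : ℝ → ℝ := fun t => max s (min t T) with hp
  have hpmem : ∀ t, p t ∈ Icc s T := fun t =>
    ⟨le_max_left _ _, max_le hsT (min_le_right _ _)⟩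
  set g : ℝ → ℝ := fun t => f (p t) with hg
  have hgc : Continuous g :=
    hf.comp_continuous (continuous_const.max (continuous_id.min continuous_const)) hpmem
  have hgeq : ∀ t ∈ Icc s T, g t = f t := by
    intro t ht
    simp only [hg, hp]
    rw [min_eq_left ht.2, max_eq_right ht.1]
  set G : ℝ → ℝ := fun u => ∫ r in s..u, g r with hG
  have hG' : ∀ x, HasDerivAt G (g x) x := fun x =>
    intervalIntegral.integral_hasDerivAt_right (hgc.intervalIntegrable _ _)
      (hgc.stronglyMeasurableAtFilter _ _) hgc.continuousAt
  have hGc : ContinuousOn G (Icc s T) := fun x _ => (hG' x).continuousAt.continuousWithinAt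
  have hGint : ∀ t ∈ Icc s T, G t = ∫ r in s..t, f r := by
    intro t ht
    apply intervalIntegral.integral_congr
    intro r hr
    rw [Set.uIcc_of_le ht.1] at hr
    exact hgeq r ⟨hr.1, hr.2.trans ht.2⟩
  have hGnn : ∀ t ∈ Icc s T, 0 ≤ G t := by
    intro t ht
    exact intervalIntegral.integral_nonneg ht.1
      (fun r hr => (hf0 (p r) (hpmem r)).trans_eq rfl)
  have key : ∀ x ∈ Icc s T, ‖G x‖ ≤ gronwallBound 0 B A (x - s) := by
    apply norm_le_gronwallBound_of_norm_deriv_right_le hGc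
      (fun x _ => (hG' x).hasDerivWithinAt)
    · simp [hG]
    · intro x hx
      have hx' : x ∈ Icc s T := ⟨hx.1, hx.2.le⟩
      have h1 : ‖g x‖ = f x := by rw [hgeq x hx', Real.norm_eq_abs, abs_of_nonneg (hf0 x hx')]
      have h2 : ‖G x‖ = G x := by rw [Real.norm_eq_abs, abs_of_nonneg (hGnn x hx')]
      rw [h1, h2]
      calc f x ≤ A + B * ∫ r in s..x, f r := h x hx'
        _ = B * G x + A := by rw [hGint x hx']; ring
  intro t ht
  calc f t ≤ A + B * ∫ r in s..t, f r := h t ht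
    _ = A + B * G t := by rw [hGint t ht]
    _ ≤ A + B * gronwallBound 0 B A (t - s) := by
        gcongr
        exact le_trans (le_abs_self _) (key t ht)
    _ ≤ A * Real.exp (B * (T - s)) := by
        rcases eq_or_lt_of_le hB with hB0 | hB0
        · rw [← hB0]
          simp [gronwallBound_K0]
        · rw [gronwallBound_of_K_ne_0 hB0.ne']
          have h1 : Real.exp (B * (t - s)) ≤ Real.exp (B * (T - s)) := by
            apply Real.exp_le_exp.2; nlinarith [ht.2]
          have h2 : (1:ℝ) ≤ Real.exp (B * (t - s)) := by
            apply Real.one_le_exp; nlinarith [ht.1]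
          have e : B * (0 * Real.exp (B * (t - s)) + A / B * (Real.exp (B * (t - s)) - 1))
              = A * (Real.exp (B * (t - s)) - 1) := by
            field_simp
            ring
          rw [e]
          nlinarith [mul_le_mul_of_nonneg_left h1 hA]

/-- a priori bounds for the linear Volterra system characterizing the
Malliavin derivatives `D_s^j X^{i,N}_t` of the interacting particle system.  The constant `C`
depends only on `σ`, `L` and `T` (not on `N`, `s` or `j`). -/
theorem statement3 (σ L T : ℝ) (hσ : 0 < σ) (hL : 0 ≤ L) (hT : 0 ≤ T) :
    ∃ C : ℝ,
      ∀ (N : ℕ), 0 < N → ∀ (s : ℝ), 0 ≤ s → s ≤ T → ∀ (j : Fin N)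
        (a : Fin N → ℝ → ℝ) (c : Fin N → Fin N → ℝ → ℝ) (d : Fin N → ℝ → ℝ),
        (∀ i, Measurable (a i)) →
        (∀ i k, Measurable (c i k)) →
        (∀ i, ∀ r ∈ Set.Icc s T, |a i r| ≤ L) →
        (∀ i k, ∀ r ∈ Set.Icc s T, |c i k r| ≤ L) →
        (∀ i, ContinuousOn (d i) (Set.Icc s T)) →
        (∀ i, ∀ t ∈ Set.Icc s T,
          d i t = (if i = j then σ else 0)
            + ∫ r in s..t, (a i r * d i r + (N : ℝ)⁻¹ * ∑ k, c i k r * d k r)) →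
        (∀ t ∈ Set.Icc s T, (N : ℝ)⁻¹ * ∑ i, |d i t| ≤ C / N) ∧
        (∀ t ∈ Set.Icc s T, |d j t| ≤ C) ∧
        (∀ i, i ≠ j → ∀ t ∈ Set.Icc s T, |d i t| ≤ C / N) := by
  set C1 : ℝ := σ * Real.exp (2 * L * T) with hC1
  have hC1nn : 0 ≤ C1 := by positivity
  set C2 : ℝ := (σ + L * C1 * T) * Real.exp (L * T) with hC2
  have hC2nn : 0 ≤ C2 := by positivity
  refine ⟨C2 + C1, ?_⟩
  intro N hN s hs0 hsT j a c d ha hc haL hcL hd heq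
  have hNpos : (0:ℝ) < N := Nat.cast_pos.2 hN
  have hN0 : (N:ℝ) ≠ 0 := hNpos.ne'
  have hNinv : (0:ℝ) ≤ (N:ℝ)⁻¹ := by positivity
  have hNinv1 : (N:ℝ)⁻¹ ≤ 1 := by
    rw [inv_le_one_iff₀]; right; exact_mod_cast hN
  set S : ℝ → ℝ := fun t => ∑ i, |d i t| with hS
  have hScont : ContinuousOn S (Set.Icc s T) := by
    apply continuousOn_finset_sum
    intro i _
    exact (hd i).abs
  have hSnn : ∀ t, 0 ≤ S t := fun t => Finset.sum_nonneg fun i _ => abs_nonneg _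
  have hdS : ∀ k t, |d k t| ≤ S t := fun k t =>
    Finset.single_le_sum (f := fun i => |d i t|) (fun i _ => abs_nonneg _) (Finset.mem_univ k)
  obtain ⟨M, hM⟩ := isCompact_Icc.exists_bound_of_continuousOn hScont
  have hSM : ∀ t ∈ Set.Icc s T, S t ≤ M := fun t ht => (le_abs_self _).trans (hM t ht)
  -- the dominating continuous function
  set β : Fin N → ℝ → ℝ := fun i r => L * |d i r| + L * ((N:ℝ)⁻¹ * S r) with hβ
  have hβcont : ∀ i, ContinuousOn (β i) (Set.Icc s T) := fun i =>
    (continuousOn_const.mul (hd i).abs).add (continuousOn_const.mul (continuousOn_const.mul hScont))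
  have hβnn : ∀ i r, 0 ≤ β i r := fun i r => by
    have := hSnn r
    have := abs_nonneg (d i r)
    positivity
  have hIccsub : ∀ t ∈ Set.Icc s T, Set.Icc s t ⊆ Set.Icc s T := fun t ht =>
    Set.Icc_subset_Icc le_rfl ht.2
  have hβint : ∀ i, ∀ t ∈ Set.Icc s T, IntervalIntegrable (β i) volume s t := by
    intro i t ht
    apply ContinuousOn.intervalIntegrable
    rw [Set.uIcc_of_le ht.1]
    exact (hβcont i).mono (hIccsub t ht)
  -- the actual integrand
  set ψ : Fin N → ℝ → ℝ :=
    fun i r => a i r * d i r + (N:ℝ)⁻¹ * ∑ k, c i k r * d k r with hψ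
  have hψle : ∀ i, ∀ r ∈ Set.Icc s T, |ψ i r| ≤ β i r := by
    intro i r hr
    have h1 : |a i r * d i r| ≤ L * |d i r| := by
      rw [abs_mul]
      exact mul_le_mul_of_nonneg_right (haL i r hr) (abs_nonneg _)
    have h2 : |∑ k, c i k r * d k r| ≤ L * S r := by
      refine (Finset.abs_sum_le_sum_abs _ _).trans ?_
      rw [hS, Finset.mul_sum]
      apply Finset.sum_le_sum
      intro k _
      rw [abs_mul]
      exact mul_le_mul_of_nonneg_right (hcL i k r hr) (abs_nonneg _)
    calc |ψ i r| ≤ |a i r * d i r| + |(N:ℝ)⁻¹ * ∑ k, c i k r * d k r| := abs_add_le _ _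
      _ ≤ L * |d i r| + (N:ℝ)⁻¹ * (L * S r) := by
          refine add_le_add h1 ?_
          rw [abs_mul, abs_of_nonneg hNinv]
          exact mul_le_mul_of_nonneg_left h2 hNinv
      _ = β i r := by rw [hβ]; ring
  have hψint : ∀ i, ∀ t ∈ Set.Icc s T, IntervalIntegrable (ψ i) volume s t := by
    intro i t ht
    rw [intervalIntegrable_iff_integrableOn_Ioc_of_le ht.1]
    have hIocsub : Set.Ioc s t ⊆ Set.Icc s T := fun r hr => ⟨hr.1.le, hr.2.trans ht.2⟩
    have hdm : ∀ k, AEMeasurable (d k) (volume.restrict (Set.Ioc s t)) := fun k =>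
      ContinuousOn.aemeasurable ((hd k).mono hIocsub) measurableSet_Ioc
    have hmeas : AEMeasurable (ψ i) (volume.restrict (Set.Ioc s t)) := by
      refine AEMeasurable.add ((ha i).aemeasurable.mul (hdm i)) ?_
      exact aemeasurable_const.mul
        (Finset.aemeasurable_fun_sum _ fun k _ => (hc i k).aemeasurable.mul (hdm k))
    refine Integrable.mono' (g := fun _ => L * M + L * M)
      (by exact integrableOn_const measure_Ioc_lt_top.ne) hmeas.aestronglyMeasurable ?_
    refine (ae_restrict_iff' measurableSet_Ioc).2 (Filter.Eventually.of_forall fun r hr => ?_)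
    have hr' : r ∈ Set.Icc s T := hIocsub hr
    have h1 : |ψ i r| ≤ β i r := hψle i r hr'
    have h2 : S r ≤ M := hSM r hr'
    have h3 : |d i r| ≤ M := (hdS i r).trans h2
    have h4 : (N:ℝ)⁻¹ * S r ≤ M := by nlinarith [hSnn r]
    rw [Real.norm_eq_abs]
    calc |ψ i r| ≤ β i r := h1
      _ ≤ L * M + L * M := by
          rw [hβ]
          exact add_le_add (mul_le_mul_of_nonneg_left h3 hL) (mul_le_mul_of_nonneg_left h4 hL)
  -- the key pointwise inequality
  have hstar : ∀ i, ∀ t ∈ Set.Icc s T,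
      |d i t| ≤ (if i = j then σ else 0) + ∫ r in s..t, β i r := by
    intro i t ht
    have hind : |(if i = j then σ else 0 : ℝ)| = (if i = j then σ else 0) := by
      apply abs_of_nonneg; split_ifs; exacts [hσ.le, le_rfl]
    rw [heq i t ht]
    calc |(if i = j then σ else 0) + ∫ r in s..t, ψ i r|
        ≤ |(if i = j then σ else 0 : ℝ)| + |∫ r in s..t, ψ i r| := abs_add_le _ _
      _ ≤ (if i = j then σ else 0) + ∫ r in s..t, |ψ i r| := by
          rw [hind]
          exact add_le_add_right (intervalIntegral.abs_integral_le_integral_abs ht.1) _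
      _ ≤ (if i = j then σ else 0) + ∫ r in s..t, β i r := by
          refine add_le_add_right ?_ _
          refine intervalIntegral.integral_mono_on ht.1 (hψint i t ht).abs (hβint i t ht) ?_
          intro r hr
          exact hψle i r (hIccsub t ht hr)
  -- Application 1 : bound on S
  have hS1 : ∀ t ∈ Set.Icc s T, S t ≤ σ + (2 * L) * ∫ r in s..t, S r := by
    intro t ht
    have hsum : S t ≤ ∑ i, ((if i = j then σ else 0) + ∫ r in s..t, β i r) :=
      Finset.sum_le_sum fun i _ => hstar i t ht
    rw [Finset.sum_add_distrib] at hsum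
    have hι : ∑ i : Fin N, (if i = j then σ else 0 : ℝ) = σ := by simp
    have hSint : IntervalIntegrable S volume s t := by
      apply ContinuousOn.intervalIntegrable
      rw [Set.uIcc_of_le ht.1]
      exact hScont.mono (hIccsub t ht)
    have hβsum : ∀ r, ∑ i : Fin N, β i r = 2 * L * S r := by
      intro r
      rw [hβ]
      simp only [Finset.sum_add_distrib, ← Finset.mul_sum, Finset.sum_const,
        Finset.card_univ, Fintype.card_fin, nsmul_eq_mul, ← hS]
      field_simp
      ring
    have hint : ∑ i : Fin N, ∫ r in s..t, β i r = (2 * L) * ∫ r in s..t, S r := by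
      rw [← intervalIntegral.integral_finset_sum (fun i _ => hβint i t ht)]
      rw [← intervalIntegral.integral_const_mul]
      exact intervalIntegral.integral_congr fun r _ => hβsum r
    rw [hι, hint] at hsum
    exact hsum
  have hSb : ∀ t ∈ Set.Icc s T, S t ≤ C1 := by
    intro t ht
    refine (gronwall_int hsT hσ.le (by positivity) hScont (fun t _ => hSnn t) hS1 t ht).trans ?_
    rw [hC1]
    have hexp : Real.exp (2 * L * (T - s)) ≤ Real.exp (2 * L * T) := by
      apply Real.exp_le_exp.2; nlinarith
    exact mul_le_mul_of_nonneg_left hexp hσ.le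
  -- Application 2/3 : common helper
  have happ : ∀ (i : Fin N) (ι Q : ℝ), 0 ≤ ι → 0 ≤ Q →
      ((if i = j then σ else 0 : ℝ) ≤ ι) → (∀ r ∈ Set.Icc s T, (N:ℝ)⁻¹ * S r ≤ Q) →
      ∀ t ∈ Set.Icc s T, |d i t| ≤ (ι + L * Q * T) * Real.exp (L * T) := by
    intro i ι Q hι hQ hιi hQle
    have hstep : ∀ t ∈ Set.Icc s T,
        |d i t| ≤ (ι + L * Q * T) + L * ∫ r in s..t, |d i r| := by
      intro t ht
      have hdint : IntervalIntegrable (fun r => |d i r|) volume s t := by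
        apply ContinuousOn.intervalIntegrable
        rw [Set.uIcc_of_le ht.1]
        exact (hd i).abs.mono (hIccsub t ht)
      have hrhsint : IntervalIntegrable (fun r => L * |d i r| + L * Q) volume s t :=
        (hdint.const_mul L).add intervalIntegrable_const
      have hmono : ∫ r in s..t, β i r ≤ ∫ r in s..t, (L * |d i r| + L * Q) := by
        refine intervalIntegral.integral_mono_on ht.1 (hβint i t ht) hrhsint ?_
        intro r hr
        have hr' : r ∈ Set.Icc s T := hIccsub t ht hr
        rw [hβ]
        exact add_le_add_right (mul_le_mul_of_nonneg_left (hQle r hr') hL) _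
      have heval : ∫ r in s..t, (L * |d i r| + L * Q)
          = L * (∫ r in s..t, |d i r|) + L * Q * (t - s) := by
        rw [intervalIntegral.integral_add (hdint.const_mul L) intervalIntegrable_const,
          intervalIntegral.integral_const_mul, intervalIntegral.integral_const, smul_eq_mul]
        ring
      have hts : L * Q * (t - s) ≤ L * Q * T := by nlinarith [ht.1, ht.2, mul_nonneg hL hQ]
      calc |d i t| ≤ (if i = j then σ else 0) + ∫ r in s..t, β i r := hstar i t ht
        _ ≤ ι + (L * (∫ r in s..t, |d i r|) + L * Q * (t - s)) := by
            rw [← heval]; exact add_le_add hιi hmono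
        _ ≤ (ι + L * Q * T) + L * ∫ r in s..t, |d i r| := by linarith
    intro t ht
    refine (gronwall_int hsT (by positivity) hL (hd i).abs
      (fun r _ => abs_nonneg _) hstep t ht).trans ?_
    have hexp : Real.exp (L * (T - s)) ≤ Real.exp (L * T) := by
      apply Real.exp_le_exp.2; nlinarith
    exact mul_le_mul_of_nonneg_left hexp (by positivity)
  refine ⟨?_, ?_, ?_⟩
  · intro t ht
    have h1 : S t ≤ C2 + C1 := (hSb t ht).trans (by linarith)
    show (N:ℝ)⁻¹ * S t ≤ (C2 + C1) / N
    rw [inv_mul_eq_div]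
    exact (div_le_div_iff_of_pos_right hNpos).2 h1
  · intro t ht
    have hQle : ∀ r ∈ Set.Icc s T, (N:ℝ)⁻¹ * S r ≤ C1 := by
      intro r hr
      have := hSb r hr
      nlinarith [hSnn r]
    have := happ j σ C1 hσ.le hC1nn (by simp) hQle t ht
    rw [← hC2] at this
    linarith
  · intro i hij t ht
    have hQle : ∀ r ∈ Set.Icc s T, (N:ℝ)⁻¹ * S r ≤ C1 / N := by
      intro r hr
      have h1 := hSb r hr
      rw [inv_mul_eq_div]
      exact (div_le_div_iff_of_pos_right hNpos).2 h1
    have h2 := happ i 0 (C1 / N) le_rfl (by positivity) (by simp [hij]) hQle t ht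
    have h3 : (0 + L * (C1 / N) * T) * Real.exp (L * T)
        = (L * C1 * T * Real.exp (L * T)) / N := by field_simp; ring
    rw [h3] at h2
    refine h2.trans ?_
    have h4 : L * C1 * T * Real.exp (L * T) ≤ C2 + C1 := by
      rw [hC2]
      nlinarith [Real.exp_pos (L * T), mul_nonneg (mul_nonneg hL hC1nn) hT,
        mul_pos hσ (Real.exp_pos (L * T))]
    gcongr
end

section
/- Let H ≥ 1/2 and let b_{x,m} : ℝ×𝒫₂(ℝ)→ℝ and b_{μ,m} : ℝ×𝒫₂(ℝ)×ℝ→ℝ (m = 1,…,p) be measurable, bounded and Lipschitz, with g := ∑_m θ⁰_m b_{x,m} and h := ∑_m θ⁰_m b_{μ,m} in the defining equations of the Malliavin derivatives, and define D_s^i b_m(X^{i,N}_t, μ^N_t) := b_{x,m}(X^{i,N}_t,μ^N_t) D_s^i X^{i,N}_t + N^{−1}∑_{k=1}^N b_{μ,m}(X^{i,N}_t,μ^N_t,X^{k,N}_t) D_s^i X^{k,N}_t. Then there exist constants c, N₀ > 0 such that for all N ≥ N₀, almost surely, for all 0 ≤ s ≤ t ≤ T, all i ∈ {1,…,N} and all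 m: |D_s^i b_m(X^{i,N}_t, μ^N_t) − σ b_{x,m}(X^{i,N}_t, μ^N_t) exp(∫_s^t ⟨θ⁰, (b_{x,1},…,b_{x,p})(X^{i,N}_r, μ^N_r)⟩ dr)| ≤ c/N. -/
open MeasureTheory ProbabilityTheory Filter

noncomputable section

/-- The 2-Wasserstein distance between two Borel measures on `ℝ`. -/
def W2 (μ ν : Measure ℝ) : ℝ :=
  Real.sqrt (sInf {r : ℝ | ∃ m : Measure (ℝ × ℝ), IsProbabilityMeasure m ∧
    m.map Prod.fst = μ ∧ m.map Prod.snd = ν ∧ r = ∫ z, |z.1 - z.2| ^ 2 ∂m})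

/-- The empirical measure `N⁻¹ ∑_j δ_{x_j}` of `N` points. -/
def empMeas {N : ℕ} (x : Fin N → ℝ) : Measure ℝ :=
  ((N : ENNReal))⁻¹ • ∑ j, Measure.dirac (x j)

lemma W2_emp_le {N : ℕ} (hN : 0 < N) (x y : Fin N → ℝ) :
    W2 (empMeas x) (empMeas y) ≤ Real.sqrt ((N : ℝ)⁻¹ * ∑ j, |x j - y j| ^ 2) := by
  have hNE : (N : ENNReal) ≠ 0 := by exact_mod_cast hN.ne'
  have hf : Continuous fun z : ℝ × ℝ => |z.1 - z.2| ^ 2 :=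
    ((continuous_fst.sub continuous_snd).abs).pow 2
  set m : Measure (ℝ × ℝ) := ((N : ENNReal))⁻¹ • ∑ j, Measure.dirac (x j, y j) with hm
  have hint : ∀ j : Fin N, Integrable (fun z : ℝ × ℝ => |z.1 - z.2| ^ 2)
      (Measure.dirac (x j, y j)) := by
    intro j
    refine ⟨hf.aestronglyMeasurable, ?_⟩
    rw [hasFiniteIntegral_def, lintegral_dirac' _ (by fun_prop)]
    exact ENNReal.coe_lt_top
  have hI : ∫ z, |z.1 - z.2| ^ 2 ∂m = (N : ℝ)⁻¹ * ∑ j, |x j - y j| ^ 2 := by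
    rw [hm, integral_smul_measure, integral_finset_sum_measure (fun j _ => hint j)]
    simp [ENNReal.toReal_inv, smul_eq_mul]
  have hmem : ((N : ℝ)⁻¹ * ∑ j, |x j - y j| ^ 2) ∈
      {r : ℝ | ∃ m : Measure (ℝ × ℝ), IsProbabilityMeasure m ∧
        m.map Prod.fst = empMeas x ∧ m.map Prod.snd = empMeas y ∧
        r = ∫ z, |z.1 - z.2| ^ 2 ∂m} := by
    refine ⟨m, ?_, ?_, ?_, hI.symm⟩
    · constructor
      rw [hm]
      simp only [Measure.smul_apply, Measure.finset_sum_apply, Measure.dirac_apply,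
        smul_eq_mul]
      simp [ENNReal.inv_mul_cancel hNE (by simp : (N : ENNReal) ≠ ⊤)]
    · ext A hA
      rw [Measure.map_apply measurable_fst hA, hm, empMeas]
      simp only [Measure.smul_apply, Measure.finset_sum_apply, smul_eq_mul]
      congr 1
      refine Finset.sum_congr rfl fun j _ => ?_
      rw [Measure.dirac_apply' _ (measurable_fst hA), Measure.dirac_apply' _ hA]
      by_cases h : x j ∈ A <;> simp [Set.indicator_apply, Set.mem_preimage, h]
    · ext A hA
      rw [Measure.map_apply measurable_snd hA, hm, empMeas]
      simp only [Measure.smul_apply, Measure.finset_sum_apply, smul_eq_mul]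
      congr 1
      refine Finset.sum_congr rfl fun j _ => ?_
      rw [Measure.dirac_apply' _ (measurable_snd hA), Measure.dirac_apply' _ hA]
      by_cases h : y j ∈ A <;> simp [Set.indicator_apply, Set.mem_preimage, h]
  have hbdd : BddBelow {r : ℝ | ∃ m : Measure (ℝ × ℝ), IsProbabilityMeasure m ∧
      m.map Prod.fst = empMeas x ∧ m.map Prod.snd = empMeas y ∧
      r = ∫ z, |z.1 - z.2| ^ 2 ∂m} := by
    refine ⟨0, fun r hr => ?_⟩
    obtain ⟨m', _, _, _, hr⟩ := hr
    rw [hr]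
    exact integral_nonneg fun z => by positivity
  exact Real.sqrt_le_sqrt (csInf_le hbdd hmem)

lemma cont_comp {N : ℕ} (hN : 0 < N) {T₀ T₁ : ℝ} {Y : Fin N → ℝ → ℝ}
    (hY : ∀ j, ContinuousOn (Y j) (Set.Icc T₀ T₁))
    {F : ℝ → Measure ℝ → ℝ → ℝ} {L : ℝ} (hL : 0 ≤ L)
    (hF : ∀ x y μ ν z w, |F x μ z - F y ν w| ≤ L * (|x - y| + W2 μ ν + |z - w|))
    (i k : Fin N) :
    ContinuousOn (fun r => F (Y i r) (empMeas fun j => Y j r) (Y k r))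
      (Set.Icc T₀ T₁) := by
  intro r₀ hr₀
  set S := Set.Icc T₀ T₁
  set f := fun r => F (Y i r) (empMeas fun j => Y j r) (Y k r) with hfdef
  set ψ := fun r => L * (|Y i r - Y i r₀|
      + Real.sqrt ((N : ℝ)⁻¹ * ∑ j, |Y j r - Y j r₀| ^ 2) + |Y k r - Y k r₀|) with hψdef
  have key : ∀ r ∈ S, |f r - f r₀| ≤ ψ r := by
    intro r _
    refine (hF _ _ _ _ _ _).trans ?_
    refine mul_le_mul_of_nonneg_left ?_ hL
    have := W2_emp_le hN (fun j => Y j r) (fun j => Y j r₀)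
    gcongr
  have hψc : ContinuousWithinAt ψ S r₀ := by
    apply ContinuousWithinAt.mul continuousWithinAt_const
    refine ContinuousWithinAt.add (ContinuousWithinAt.add ?_ ?_) ?_
    · exact (((hY i r₀ hr₀).sub continuousWithinAt_const).abs)
    · refine Real.continuous_sqrt.continuousAt.comp_continuousWithinAt ?_
      refine ContinuousWithinAt.mul continuousWithinAt_const ?_
      exact tendsto_finset_sum Finset.univ fun j _ =>
        ((hY j r₀ hr₀).sub continuousWithinAt_const).abs.pow 2
    · exact (((hY k r₀ hr₀).sub continuousWithinAt_const).abs)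
  have hψ0 : ψ r₀ = 0 := by simp [hψdef]
  have hψt : Tendsto ψ (nhdsWithin r₀ S) (nhds 0) := by
    have := hψc.tendsto
    rwa [hψ0] at this
  have h1 : Tendsto (fun r => f r - f r₀) (nhdsWithin r₀ S) (nhds 0) := by
    apply squeeze_zero_norm' _ hψt
    filter_upwards [self_mem_nhdsWithin] with r hr
    simpa [Real.norm_eq_abs] using key r hr
  have : Tendsto f (nhdsWithin r₀ S) (nhds (f r₀)) := by
    have := h1.add (tendsto_const_nhds (x := f r₀))
    simpa using this
  exact this

lemma mem_nhdsWithin_Ici_of_Ico {a T x : ℝ} (hx : x ∈ Set.Ico a T) :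
    Set.Icc a T ∈ nhdsWithin x (Set.Ici x) :=
  mem_nhdsWithin.2 ⟨Set.Iio T, isOpen_Iio, hx.2,
    fun y hy => ⟨le_trans hx.1 hy.2, le_of_lt hy.1⟩⟩

lemma hasDerivWithinAt_primitive {φ : ℝ → ℝ} {a T x : ℝ}
    (hφ : ContinuousOn φ (Set.Icc a T)) (hx : x ∈ Set.Ico a T) :
    HasDerivWithinAt (fun t => ∫ r in a..t, φ r) (φ x) (Set.Ici x) x := by
  have hsub := mem_nhdsWithin_Ici_of_Ico hx
  have hsub' : Set.Icc a T ∈ nhdsWithin x (Set.Ioi x) :=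
    nhdsWithin_mono x Set.Ioi_subset_Ici_self hsub
  refine intervalIntegral.integral_hasDerivWithinAt_right (s := Set.Ici x) (t := Set.Ioi x) ?_ ?_ ?_
  · refine ContinuousOn.intervalIntegrable ?_
    rw [Set.uIcc_of_le hx.1]
    exact hφ.mono (Set.Icc_subset_Icc le_rfl hx.2.le)
  · exact ⟨Set.Icc a T, hsub', hφ.aestronglyMeasurable measurableSet_Icc⟩
  · exact (hφ x ⟨hx.1, hx.2.le⟩).mono_of_mem_nhdsWithin hsub'

section Pathwise

variable {N p : ℕ} {T σ Lb : ℝ} {θ : Fin p → ℝ}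
  {bx : Fin p → ℝ → Measure ℝ → ℝ} {bμ : Fin p → ℝ → Measure ℝ → ℝ → ℝ}

set_option maxHeartbeats 2000000 in
/-- All the pathwise estimates. -/
theorem pathwise (hN : 0 < N)
    (hbxbd : ∀ m x μ, |bx m x μ| ≤ Lb)
    (hbxLip : ∀ m x y μ ν, |bx m x μ - bx m y ν| ≤ Lb * (|x - y| + W2 μ ν))
    (hbμbd : ∀ m x μ z, |bμ m x μ z| ≤ Lb)
    (hbμLip : ∀ m x y μ ν z w,
      |bμ m x μ z - bμ m y ν w| ≤ Lb * (|x - y| + W2 μ ν + |z - w|))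
    (Y : Fin N → ℝ → ℝ) (u : Fin N → ℝ → ℝ)
    (hYc : ∀ j, ContinuousOn (Y j) (Set.Icc 0 T))
    {s : ℝ} (hs0 : 0 ≤ s) (hsT : s ≤ T) {i : Fin N}
    (hDc : ∀ k, ContinuousOn (fun t => u k t) (Set.Icc s T))
    (hDe : ∀ k, ∀ t ∈ Set.Icc s T, u k t = (if k = i then σ else 0)
      + ∫ r in s..t,
          ((∑ m', θ m' * bx m' (Y k r) (empMeas fun j => Y j r)) * u k r
            + (N : ℝ)⁻¹ * ∑ k',
                (∑ m', θ m' * bμ m' (Y k r) (empMeas fun j => Y j r) (Y k' r))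
                  * u k' r))
    {t : ℝ} (hst : s ≤ t) (htT : t ≤ T) (m : Fin p) :
    |(bx m (Y i t) (empMeas fun j => Y j t) * u i t
        + (N : ℝ)⁻¹ * ∑ k, bμ m (Y i t) (empMeas fun j => Y j t) (Y k t) * u k t)
      - σ * bx m (Y i t) (empMeas fun j => Y j t)
          * Real.exp (∫ r in s..t,
              ∑ m', θ m' * bx m' (Y i r) (empMeas fun j => Y j r))|
      ≤ (|Lb| * ((|σ| * Real.exp ((2 * ((∑ m', |θ m'|) * |Lb|) + 1) * |T|)
            + |σ| * Real.exp ((2 * ((∑ m', |θ m'|) * |Lb|) + 1) * |T|)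
              * Real.exp ((2 * ((∑ m', |θ m'|) * |Lb|) + 1) * |T|))
          * Real.exp ((2 * ((∑ m', |θ m'|) * |Lb|) + 1) * |T|)
          + |σ| * Real.exp ((2 * ((∑ m', |θ m'|) * |Lb|) + 1) * |T|)
          + |σ| * Real.exp ((2 * ((∑ m', |θ m'|) * |Lb|) + 1) * |T|)
            * Real.exp ((2 * ((∑ m', |θ m'|) * |Lb|) + 1) * |T|)) + 1) / N := by
  have hNR : (0 : ℝ) < N := by exact_mod_cast hN
  have hLb0 : 0 ≤ Lb := le_trans (abs_nonneg _) (hbxbd m 0 (Measure.dirac 0))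
  have hLb' : Lb ≤ |Lb| := le_abs_self Lb
  obtain ⟨G, hGdef⟩ : ∃ x : ℝ, x = (∑ m', |θ m'|) * |Lb| := ⟨_, rfl⟩
  rw [← hGdef]
  obtain ⟨K, hKdef⟩ : ∃ x : ℝ, x = 2 * G + 1 := ⟨_, rfl⟩
  rw [← hKdef]
  obtain ⟨C1, hC1def⟩ : ∃ x : ℝ, x = |σ| * Real.exp (K * |T|) := ⟨_, rfl⟩
  rw [← hC1def]
  obtain ⟨C2, hC2def⟩ : ∃ x : ℝ, x = C1 * Real.exp (K * |T|) := ⟨_, rfl⟩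
  rw [← hC2def]
  obtain ⟨C4, hC4def⟩ : ∃ x : ℝ, x = (C1 + C2) * Real.exp (K * |T|) := ⟨_, rfl⟩
  rw [← hC4def]
  have hG : 0 ≤ G := hGdef ▸ mul_nonneg (Finset.sum_nonneg fun _ _ => abs_nonneg _) (abs_nonneg _)
  have hK : 0 < K := by rw [hKdef]; linarith
  have hC1 : 0 ≤ C1 := hC1def ▸ mul_nonneg (abs_nonneg _) (Real.exp_pos _).le
  have hC2 : 0 ≤ C2 := hC2def ▸ mul_nonneg hC1 (Real.exp_pos _).le
  have hC4 : 0 ≤ C4 := hC4def ▸ mul_nonneg (by linarith) (Real.exp_pos _).le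
  set gg : Fin N → ℝ → ℝ :=
    fun k r => ∑ m', θ m' * bx m' (Y k r) (empMeas fun j => Y j r) with hggdef
  set hh : Fin N → Fin N → ℝ → ℝ :=
    fun k k' r => ∑ m', θ m' * bμ m' (Y k r) (empMeas fun j => Y j r) (Y k' r) with hhhdef
  set φ : Fin N → ℝ → ℝ :=
    fun k r => gg k r * u k r + (N : ℝ)⁻¹ * ∑ k', hh k k' r * u k' r with hφdef
  -- bounds on coefficients
  have hggbd : ∀ k r, |gg k r| ≤ G := by
    intro k r
    refine (Finset.abs_sum_le_sum_abs _ _).trans ?_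
    rw [hGdef, Finset.sum_mul]
    refine Finset.sum_le_sum fun m' _ => ?_
    rw [abs_mul]
    exact mul_le_mul_of_nonneg_left ((hbxbd m' _ _).trans hLb') (abs_nonneg _)
  have hhhbd : ∀ k k' r, |hh k k' r| ≤ G := by
    intro k k' r
    refine (Finset.abs_sum_le_sum_abs _ _).trans ?_
    rw [hGdef, Finset.sum_mul]
    refine Finset.sum_le_sum fun m' _ => ?_
    rw [abs_mul]
    exact mul_le_mul_of_nonneg_left ((hbμbd m' _ _ _).trans hLb') (abs_nonneg _)
  -- continuity of coefficients
  have hYs : ∀ j, ContinuousOn (Y j) (Set.Icc s T) :=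
    fun j => (hYc j).mono (Set.Icc_subset_Icc hs0 le_rfl)
  have hggc : ∀ k, ContinuousOn (gg k) (Set.Icc s T) := by
    intro k
    refine continuousOn_finset_sum _ fun m' _ => continuousOn_const.mul ?_
    refine cont_comp hN hYs hLb0 (F := fun x μ _ => bx m' x μ) ?_ k k
    intro x y μ ν z w
    refine (hbxLip m' x y μ ν).trans ?_
    have : (0:ℝ) ≤ |z - w| := abs_nonneg _
    nlinarith
  have hhhc : ∀ k k', ContinuousOn (hh k k') (Set.Icc s T) := by
    intro k k'
    refine continuousOn_finset_sum _ fun m' _ => continuousOn_const.mul ?_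
    exact cont_comp hN hYs hLb0 (hbμLip m') k k'
  have hφc : ∀ k, ContinuousOn (φ k) (Set.Icc s T) := by
    intro k
    exact ((hggc k).mul (hDc k)).add (continuousOn_const.mul
      (continuousOn_finset_sum _ fun k' _ => (hhhc k k').mul (hDc k')))
  have hveq : ∀ k, ∀ t' ∈ Set.Icc s T,
      u k t' = (if k = i then σ else 0) + ∫ r in s..t', φ k r :=
    fun k t' ht' => hDe k t' ht'
  have hvderiv : ∀ k, ∀ x ∈ Set.Ico s T,
      HasDerivWithinAt (fun t' => u k t') (φ k x) (Set.Ici x) x := by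
    intro k x hx
    have h1 : HasDerivWithinAt
        (fun t' => (if k = i then σ else (0:ℝ)) + ∫ r in s..t', φ k r)
        (φ k x) (Set.Ici x) x :=
      (hasDerivWithinAt_primitive (hφc k) hx).const_add _
    refine h1.congr_of_eventuallyEq ?_ ?_
    · exact Filter.eventuallyEq_of_mem (mem_nhdsWithin_Ici_of_Ico hx)
        fun y hy => hveq k y hy
    · exact hveq k x ⟨hx.1, hx.2.le⟩
  have hval_s : ∀ k, u k s = if k = i then σ else 0 := by
    intro k
    have h := hveq k s ⟨le_rfl, hsT⟩
    rwa [intervalIntegral.integral_same, add_zero] at h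
  -- Step 1 : uniform bound
  set F1 : ℝ → (Fin N → ℝ) := fun r k => u k r with hF1def
  have hF1c : ContinuousOn F1 (Set.Icc s T) := continuousOn_pi.2 fun k => hDc k
  have hF1d : ∀ x ∈ Set.Ico s T,
      HasDerivWithinAt F1 (fun k => φ k x) (Set.Ici x) x :=
    fun x hx => hasDerivWithinAt_pi.2 fun k => hvderiv k x hx
  have hF1a : ‖F1 s‖ ≤ |σ| := by
    rw [pi_norm_le_iff_of_nonneg (abs_nonneg σ)]
    intro k
    rw [Real.norm_eq_abs]
    show |u k s| ≤ |σ|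
    rw [hval_s k]
    split_ifs <;> simp [abs_nonneg]
  have hφbd1 : ∀ x ∈ Set.Ico s T, ‖(fun k => φ k x)‖ ≤ K * ‖F1 x‖ + 0 := by
    intro x hx
    rw [add_zero, pi_norm_le_iff_of_nonneg (mul_nonneg hK.le (norm_nonneg _))]
    intro k
    rw [Real.norm_eq_abs]
    have hvk : ∀ k', |u k' x| ≤ ‖F1 x‖ := by
      intro k'
      have := norm_le_pi_norm (F1 x) k'
      rwa [Real.norm_eq_abs] at this
    have h1 : |gg k x * u k x| ≤ G * ‖F1 x‖ := by
      rw [abs_mul]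
      exact mul_le_mul (hggbd k x) (hvk k) (abs_nonneg _) hG
    have h2 : |(N : ℝ)⁻¹ * ∑ k', hh k k' x * u k' x| ≤ G * ‖F1 x‖ := by
      rw [abs_mul, abs_inv, abs_of_nonneg (Nat.cast_nonneg N : (0:ℝ) ≤ N)]
      have hsum : |∑ k', hh k k' x * u k' x| ≤ (N : ℝ) * (G * ‖F1 x‖) := by
        refine (Finset.abs_sum_le_sum_abs _ _).trans ?_
        have : ∀ k' ∈ Finset.univ, |hh k k' x * u k' x| ≤ G * ‖F1 x‖ := by
          intro k' _
          rw [abs_mul]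
          exact mul_le_mul (hhhbd k k' x) (hvk k') (abs_nonneg _) hG
        refine (Finset.sum_le_sum this).trans ?_
        simp [Finset.card_univ]
      calc (N : ℝ)⁻¹ * |∑ k', hh k k' x * u k' x|
          ≤ (N : ℝ)⁻¹ * ((N : ℝ) * (G * ‖F1 x‖)) := by
            exact mul_le_mul_of_nonneg_left hsum (inv_nonneg.2 hNR.le)
        _ = G * ‖F1 x‖ := by
            rw [← mul_assoc, inv_mul_cancel₀ hNR.ne', one_mul]
    show |φ k x| ≤ K * ‖F1 x‖
    have := (abs_add_le (gg k x * u k x) ((N : ℝ)⁻¹ * ∑ k', hh k k' x * u k' x)).trans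
      (add_le_add h1 h2)
    have hn : 0 ≤ ‖F1 x‖ := norm_nonneg _
    calc |φ k x| ≤ G * ‖F1 x‖ + G * ‖F1 x‖ := this
      _ ≤ K * ‖F1 x‖ := by rw [hKdef]; nlinarith
  have key1 := norm_le_gronwallBound_of_norm_deriv_right_le hF1c hF1d hF1a hφbd1
  have hexpTle : ∀ x ∈ Set.Icc s T, Real.exp (K * (x - s)) ≤ Real.exp (K * |T|) := by
    intro x hx
    refine Real.exp_le_exp.2 (mul_le_mul_of_nonneg_left ?_ hK.le)
    have := le_abs_self T
    have := hx.2
    linarith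
  have hubd : ∀ x ∈ Set.Icc s T, ∀ k, |u k x| ≤ C1 := by
    intro x hx k
    have h := key1 x hx
    rw [gronwallBound_ε0] at h
    have h2 : |σ| * Real.exp (K * (x - s)) ≤ C1 := by
      rw [hC1def]
      exact mul_le_mul_of_nonneg_left (hexpTle x hx) (abs_nonneg _)
    have h3 : |u k x| ≤ ‖F1 x‖ := by
      have := norm_le_pi_norm (F1 x) k
      rwa [Real.norm_eq_abs] at this
    exact h3.trans (h.trans h2)
  -- Step 2 : off-diagonal bound
  set F2 : ℝ → (Fin N → ℝ) := fun r k => if k = i then 0 else u k r with hF2def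
  have hF2c : ContinuousOn F2 (Set.Icc s T) := by
    refine continuousOn_pi.2 fun k => ?_
    by_cases h : k = i
    · have he : (fun r => F2 r k) = fun _ => (0:ℝ) := by
        funext r; simp [hF2def, h]
      rw [he]; exact continuousOn_const
    · have he : (fun r => F2 r k) = fun r => u k r := by
        funext r; simp [hF2def, h]
      rw [he]; exact hDc k
  have hF2d : ∀ x ∈ Set.Ico s T,
      HasDerivWithinAt F2 (fun k => if k = i then 0 else φ k x) (Set.Ici x) x := by
    intro x hx
    refine hasDerivWithinAt_pi.2 fun k => ?_
    by_cases h : k = i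
    · have he : (fun r => F2 r k) = fun _ => (0:ℝ) := by
        funext r; simp [hF2def, h]
      rw [he, if_pos h]
      exact hasDerivWithinAt_const _ _ _
    · have he : (fun r => F2 r k) = fun r => u k r := by
        funext r; simp [hF2def, h]
      rw [he, if_neg h]
      exact hvderiv k x hx
  have hF2a : ‖F2 s‖ ≤ 0 := by
    rw [pi_norm_le_iff_of_nonneg le_rfl]
    intro k
    rw [Real.norm_eq_abs]
    show |if k = i then (0:ℝ) else u k s| ≤ 0
    by_cases h : k = i
    · simp [h]
    · rw [if_neg h, hval_s k, if_neg h]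
      simp
  have hF2comp : ∀ x, ∀ k, k ≠ i → |u k x| ≤ ‖F2 x‖ := by
    intro x k hk
    have := norm_le_pi_norm (F2 x) k
    rw [Real.norm_eq_abs] at this
    show |u k x| ≤ ‖F2 x‖
    have he : F2 x k = u k x := if_neg hk
    rwa [he] at this
  have hφbd2 : ∀ x ∈ Set.Ico s T,
      ‖(fun k => if k = i then (0:ℝ) else φ k x)‖ ≤ K * ‖F2 x‖ + K * C1 / N := by
    intro x hx
    have hrhs : 0 ≤ K * ‖F2 x‖ + K * C1 / N :=
      add_nonneg (mul_nonneg hK.le (norm_nonneg _))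
        (div_nonneg (mul_nonneg hK.le hC1) hNR.le)
    rw [pi_norm_le_iff_of_nonneg hrhs]
    intro k
    rw [Real.norm_eq_abs]
    by_cases h : k = i
    · rw [if_pos h, abs_zero]
      exact hrhs
    · rw [if_neg h]
      have h1 : |gg k x * u k x| ≤ G * ‖F2 x‖ := by
        rw [abs_mul]
        exact mul_le_mul (hggbd k x) (hF2comp x k h) (abs_nonneg _) hG
      have hsplit : ∑ k', hh k k' x * u k' x
          = hh k i x * u i x + ∑ k' ∈ Finset.univ.erase i, hh k k' x * u k' x :=
        (Finset.add_sum_erase _ _ (Finset.mem_univ i)).symm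
      have h2a : |hh k i x * u i x| ≤ G * C1 := by
        rw [abs_mul]
        exact mul_le_mul (hhhbd k i x) (hubd x ⟨hx.1, hx.2.le⟩ i) (abs_nonneg _) hG
      have h2b : |∑ k' ∈ Finset.univ.erase i, hh k k' x * u k' x|
          ≤ (N : ℝ) * (G * ‖F2 x‖) := by
        refine (Finset.abs_sum_le_sum_abs _ _).trans ?_
        have hterm : ∀ k' ∈ Finset.univ.erase i, |hh k k' x * u k' x| ≤ G * ‖F2 x‖ := by
          intro k' hk'
          rw [abs_mul]
          exact mul_le_mul (hhhbd k k' x)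
            (hF2comp x k' (Finset.ne_of_mem_erase hk')) (abs_nonneg _) hG
        refine (Finset.sum_le_sum hterm).trans ?_
        rw [Finset.sum_const, nsmul_eq_mul]
        have hcard : ((Finset.univ.erase i).card : ℝ) ≤ (N : ℝ) := by
          have := Finset.card_erase_le (a := i) (s := (Finset.univ : Finset (Fin N)))
          have h2 : (Finset.univ : Finset (Fin N)).card = N := Finset.card_univ.trans (Fintype.card_fin N)
          exact_mod_cast le_trans this (le_of_eq h2)
        exact mul_le_mul_of_nonneg_right hcard (mul_nonneg hG (norm_nonneg _))
      have h2 : |(N : ℝ)⁻¹ * ∑ k', hh k k' x * u k' x|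
          ≤ (N : ℝ)⁻¹ * (G * C1) + G * ‖F2 x‖ := by
        rw [abs_mul, abs_inv, abs_of_nonneg (Nat.cast_nonneg N : (0:ℝ) ≤ N), hsplit]
        have := (abs_add_le _ _).trans (add_le_add h2a h2b)
        calc (N : ℝ)⁻¹ * |hh k i x * u i x + ∑ k' ∈ Finset.univ.erase i, hh k k' x * u k' x|
            ≤ (N : ℝ)⁻¹ * (G * C1 + (N : ℝ) * (G * ‖F2 x‖)) :=
              mul_le_mul_of_nonneg_left this (inv_nonneg.2 hNR.le)
          _ = (N : ℝ)⁻¹ * (G * C1) + G * ‖F2 x‖ := by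
              rw [mul_add]
              congr 1
              rw [← mul_assoc, inv_mul_cancel₀ hNR.ne', one_mul]
      show |φ k x| ≤ K * ‖F2 x‖ + K * C1 / N
      have habs := (abs_add_le (gg k x * u k x)
        ((N : ℝ)⁻¹ * ∑ k', hh k k' x * u k' x)).trans (add_le_add h1 h2)
      have hn : 0 ≤ ‖F2 x‖ := norm_nonneg _
      have hGK : G * C1 ≤ K * C1 := mul_le_mul_of_nonneg_right (by rw [hKdef]; linarith) hC1
      have hdiv : (N : ℝ)⁻¹ * (G * C1) ≤ K * C1 / N := by
        rw [div_eq_inv_mul]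
        exact mul_le_mul_of_nonneg_left hGK (inv_nonneg.2 hNR.le)
      calc |φ k x| ≤ G * ‖F2 x‖ + ((N : ℝ)⁻¹ * (G * C1) + G * ‖F2 x‖) := habs
        _ ≤ K * ‖F2 x‖ + K * C1 / N := by rw [hKdef]; rw [hKdef] at hdiv; nlinarith
  have key2 := norm_le_gronwallBound_of_norm_deriv_right_le hF2c hF2d hF2a hφbd2
  have hgronb : ∀ ε : ℝ, 0 ≤ ε → ∀ x ∈ Set.Icc s T,
      gronwallBound 0 K ε (x - s) ≤ ε / K * Real.exp (K * |T|) := by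
    intro ε hε x hx
    rw [gronwallBound_of_K_ne_0 hK.ne']
    have h1 : Real.exp (K * (x - s)) - 1 ≤ Real.exp (K * |T|) := by
      have := hexpTle x hx
      have := Real.exp_pos (K * (x - s))
      linarith
    have h2 : 0 ≤ ε / K := div_nonneg hε hK.le
    calc (0:ℝ) * Real.exp (K * (x - s)) + ε / K * (Real.exp (K * (x - s)) - 1)
        = ε / K * (Real.exp (K * (x - s)) - 1) := by ring
      _ ≤ ε / K * Real.exp (K * |T|) := mul_le_mul_of_nonneg_left h1 h2
  have hubd2 : ∀ x ∈ Set.Icc s T, ∀ k, k ≠ i → |u k x| ≤ C2 / N := by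
    intro x hx k hk
    have h := (key2 x hx).trans (hgronb (K * C1 / N) (div_nonneg (mul_nonneg hK.le hC1) hNR.le) x hx)
    have heq : K * C1 / N / K * Real.exp (K * |T|) = C2 / N := by
      rw [hC2def]
      field_simp
    rw [heq] at h
    exact (hF2comp x k hk).trans h
  -- Step 3 : comparison with the exponential
  set E : ℝ → ℝ := fun t' => Real.exp (∫ r in s..t', gg i r) with hEdef
  set w : ℝ → ℝ := fun t' => u i t' - σ * E t' with hwdef
  have hprim : ContinuousOn (fun t' => ∫ r in s..t', gg i r) (Set.Icc s T) := by
    have h := intervalIntegral.continuousOn_primitive_interval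
      (a := s) (b := T) (μ := volume) (f := gg i) ?_
    · rwa [Set.uIcc_of_le hsT] at h
    · rw [Set.uIcc_of_le hsT]
      exact (hggc i).integrableOn_Icc
  have hEc : ContinuousOn E (Set.Icc s T) := Real.continuous_exp.comp_continuousOn hprim
  have hwc : ContinuousOn w (Set.Icc s T) := (hDc i).sub (continuousOn_const.mul hEc)
  have hwd : ∀ x ∈ Set.Ico s T,
      HasDerivWithinAt w
        (gg i x * w x + (N : ℝ)⁻¹ * ∑ k', hh i k' x * u k' x) (Set.Ici x) x := by
    intro x hx
    have h1 := hvderiv i x hx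
    have h2 : HasDerivWithinAt E (Real.exp (∫ r in s..x, gg i r) * gg i x)
        (Set.Ici x) x := (hasDerivWithinAt_primitive (hggc i) hx).exp
    have h3 := h1.sub (h2.const_mul σ)
    convert h3 using 1
    show gg i x * (u i x - σ * E x) + (N : ℝ)⁻¹ * ∑ k', hh i k' x * u k' x
        = (gg i x * u i x + (N : ℝ)⁻¹ * ∑ k', hh i k' x * u k' x)
          - σ * (Real.exp (∫ r in s..x, gg i r) * gg i x)
    have hEx : E x = Real.exp (∫ r in s..x, gg i r) := rfl
    rw [hEx]
    ring
    rfl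
    rfl
    rfl
  have hwa : ‖w s‖ ≤ 0 := by
    rw [Real.norm_eq_abs]
    show |u i s - σ * E s| ≤ 0
    have hE0 : E s = 1 := by
      show Real.exp (∫ r in s..s, gg i r) = 1
      rw [intervalIntegral.integral_same, Real.exp_zero]
    rw [hval_s i, if_pos rfl, hE0]
    simp
  have hwb : ∀ x ∈ Set.Ico s T,
      ‖gg i x * w x + (N : ℝ)⁻¹ * ∑ k', hh i k' x * u k' x‖
        ≤ K * ‖w x‖ + K * (C1 + C2) / N := by
    intro x hx
    rw [Real.norm_eq_abs, Real.norm_eq_abs]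
    have h1 : |gg i x * w x| ≤ G * |w x| := by
      rw [abs_mul]
      exact mul_le_mul_of_nonneg_right (hggbd i x) (abs_nonneg _)
    have hsplit : ∑ k', hh i k' x * u k' x
        = hh i i x * u i x + ∑ k' ∈ Finset.univ.erase i, hh i k' x * u k' x :=
      (Finset.add_sum_erase _ _ (Finset.mem_univ i)).symm
    have h2a : |hh i i x * u i x| ≤ G * C1 := by
      rw [abs_mul]
      exact mul_le_mul (hhhbd i i x) (hubd x ⟨hx.1, hx.2.le⟩ i) (abs_nonneg _) hG
    have h2b : |∑ k' ∈ Finset.univ.erase i, hh i k' x * u k' x| ≤ (N : ℝ) * (G * (C2 / N)) := by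
      refine (Finset.abs_sum_le_sum_abs _ _).trans ?_
      have hterm : ∀ k' ∈ Finset.univ.erase i, |hh i k' x * u k' x| ≤ G * (C2 / N) := by
        intro k' hk'
        rw [abs_mul]
        exact mul_le_mul (hhhbd i k' x)
          (hubd2 x ⟨hx.1, hx.2.le⟩ k' (Finset.ne_of_mem_erase hk')) (abs_nonneg _) hG
      refine (Finset.sum_le_sum hterm).trans ?_
      rw [Finset.sum_const, nsmul_eq_mul]
      have hcard : ((Finset.univ.erase i).card : ℝ) ≤ (N : ℝ) := by
        have := Finset.card_erase_le (a := i) (s := (Finset.univ : Finset (Fin N)))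
        have h2 : (Finset.univ : Finset (Fin N)).card = N :=
          Finset.card_univ.trans (Fintype.card_fin N)
        exact_mod_cast le_trans this (le_of_eq h2)
      exact mul_le_mul_of_nonneg_right hcard
        (mul_nonneg hG (div_nonneg hC2 hNR.le))
    have h2 : |(N : ℝ)⁻¹ * ∑ k', hh i k' x * u k' x| ≤ K * (C1 + C2) / N := by
      rw [abs_mul, abs_inv, abs_of_nonneg (Nat.cast_nonneg N : (0:ℝ) ≤ N), hsplit]
      have hb := (abs_add_le _ _).trans (add_le_add h2a h2b)
      have hNC : (N : ℝ) * (G * (C2 / N)) = G * C2 := by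
        field_simp
      rw [hNC] at hb
      calc (N : ℝ)⁻¹ * |hh i i x * u i x + ∑ k' ∈ Finset.univ.erase i, hh i k' x * u k' x|
          ≤ (N : ℝ)⁻¹ * (G * C1 + G * C2) :=
            mul_le_mul_of_nonneg_left hb (inv_nonneg.2 hNR.le)
        _ ≤ K * (C1 + C2) / N := by
            rw [div_eq_inv_mul]
            refine mul_le_mul_of_nonneg_left ?_ (inv_nonneg.2 hNR.le)
            rw [hKdef]
            nlinarith
    refine (abs_add_le _ _).trans ?_
    have hKG : G * |w x| ≤ K * |w x| :=
      mul_le_mul_of_nonneg_right (by rw [hKdef]; linarith) (abs_nonneg _)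
    linarith
  have key3 := norm_le_gronwallBound_of_norm_deriv_right_le hwc hwd hwa hwb
  have hwbd : |w t| ≤ C4 / N := by
    have h := (key3 t ⟨hst, htT⟩).trans
      (hgronb (K * (C1 + C2) / N)
        (div_nonneg (mul_nonneg hK.le (by linarith)) hNR.le) t ⟨hst, htT⟩)
    rw [Real.norm_eq_abs] at h
    have heq : K * (C1 + C2) / N / K * Real.exp (K * |T|) = C4 / N := by
      rw [hC4def]
      field_simp
    rwa [heq] at h
  -- Conclusion
  have htmem : t ∈ Set.Icc s T := ⟨hst, htT⟩
  have hbx' : |bx m (Y i t) (empMeas fun j => Y j t)| ≤ |Lb| :=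
    (hbxbd m _ _).trans hLb'
  have hgoal_eq : (bx m (Y i t) (empMeas fun j => Y j t) * u i t
        + (N : ℝ)⁻¹ * ∑ k, bμ m (Y i t) (empMeas fun j => Y j t) (Y k t) * u k t)
      - σ * bx m (Y i t) (empMeas fun j => Y j t) * E t
      = bx m (Y i t) (empMeas fun j => Y j t) * w t
        + (N : ℝ)⁻¹ * ∑ k, bμ m (Y i t) (empMeas fun j => Y j t) (Y k t) * u k t := by
    rw [hwdef]
    ring
  show |(bx m (Y i t) (empMeas fun j => Y j t) * u i t
        + (N : ℝ)⁻¹ * ∑ k, bμ m (Y i t) (empMeas fun j => Y j t) (Y k t) * u k t)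
      - σ * bx m (Y i t) (empMeas fun j => Y j t) * E t|
      ≤ (|Lb| * (C4 + C1 + C2) + 1) / N
  rw [hgoal_eq]
  have hA : |bx m (Y i t) (empMeas fun j => Y j t) * w t| ≤ |Lb| * (C4 / N) := by
    rw [abs_mul]
    exact mul_le_mul hbx' hwbd (abs_nonneg _) (abs_nonneg _)
  have hBsplit : ∑ k, bμ m (Y i t) (empMeas fun j => Y j t) (Y k t) * u k t
      = bμ m (Y i t) (empMeas fun j => Y j t) (Y i t) * u i t
        + ∑ k ∈ Finset.univ.erase i, bμ m (Y i t) (empMeas fun j => Y j t) (Y k t) * u k t :=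
    (Finset.add_sum_erase _ _ (Finset.mem_univ i)).symm
  have hB1 : |bμ m (Y i t) (empMeas fun j => Y j t) (Y i t) * u i t| ≤ |Lb| * C1 := by
    rw [abs_mul]
    exact mul_le_mul ((hbμbd m _ _ _).trans hLb') (hubd t htmem i) (abs_nonneg _) (abs_nonneg _)
  have hB2 : |∑ k ∈ Finset.univ.erase i, bμ m (Y i t) (empMeas fun j => Y j t) (Y k t) * u k t|
      ≤ (N : ℝ) * (|Lb| * (C2 / N)) := by
    refine (Finset.abs_sum_le_sum_abs _ _).trans ?_
    have hterm : ∀ k ∈ Finset.univ.erase i,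
        |bμ m (Y i t) (empMeas fun j => Y j t) (Y k t) * u k t| ≤ |Lb| * (C2 / N) := by
      intro k hk
      rw [abs_mul]
      exact mul_le_mul ((hbμbd m _ _ _).trans hLb')
        (hubd2 t htmem k (Finset.ne_of_mem_erase hk)) (abs_nonneg _) (abs_nonneg _)
    refine (Finset.sum_le_sum hterm).trans ?_
    rw [Finset.sum_const, nsmul_eq_mul]
    have hcard : ((Finset.univ.erase i).card : ℝ) ≤ (N : ℝ) := by
      have := Finset.card_erase_le (a := i) (s := (Finset.univ : Finset (Fin N)))
      have h2 : (Finset.univ : Finset (Fin N)).card = N :=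
        Finset.card_univ.trans (Fintype.card_fin N)
      exact_mod_cast le_trans this (le_of_eq h2)
    exact mul_le_mul_of_nonneg_right hcard
      (mul_nonneg (abs_nonneg _) (div_nonneg hC2 hNR.le))
  have hB : |(N : ℝ)⁻¹ * ∑ k, bμ m (Y i t) (empMeas fun j => Y j t) (Y k t) * u k t|
      ≤ (|Lb| * C1 + |Lb| * C2) / N := by
    rw [abs_mul, abs_inv, abs_of_nonneg (Nat.cast_nonneg N : (0:ℝ) ≤ N), hBsplit]
    have hb := (abs_add_le _ _).trans (add_le_add hB1 hB2)
    have hNC : (N : ℝ) * (|Lb| * (C2 / N)) = |Lb| * C2 := by field_simp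
    rw [hNC] at hb
    calc (N : ℝ)⁻¹ * |bμ m (Y i t) (empMeas fun j => Y j t) (Y i t) * u i t
          + ∑ k ∈ Finset.univ.erase i, bμ m (Y i t) (empMeas fun j => Y j t) (Y k t) * u k t|
        ≤ (N : ℝ)⁻¹ * (|Lb| * C1 + |Lb| * C2) :=
          mul_le_mul_of_nonneg_left hb (inv_nonneg.2 hNR.le)
      _ = (|Lb| * C1 + |Lb| * C2) / N := by rw [div_eq_inv_mul]
  refine (abs_add_le _ _).trans ?_
  have hfinal : |Lb| * (C4 / (N:ℝ)) + (|Lb| * C1 + |Lb| * C2) / N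
      ≤ (|Lb| * (C4 + C1 + C2) + 1) / N := by
    have h1 : |Lb| * (C4 / (N:ℝ)) = (|Lb| * C4) / N := by ring
    rw [h1, ← add_div]
    refine div_le_div_of_nonneg_right ?_ hNR.le
    nlinarith [abs_nonneg Lb]
  calc |bx m (Y i t) (empMeas fun j => Y j t) * w t|
        + |(N : ℝ)⁻¹ * ∑ k, bμ m (Y i t) (empMeas fun j => Y j t) (Y k t) * u k t|
      ≤ |Lb| * (C4 / N) + (|Lb| * C1 + |Lb| * C2) / N := add_le_add hA hB
    _ ≤ (|Lb| * (C4 + C1 + C2) + 1) / N := hfinal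

end Pathwise


/-- The interacting particle system together with its Malliavin derivatives
`D i k s t ω = D_s^i X^{k,N}_t`, whose Volterra equations have coefficients
`g = ∑_m θ_m b_{x,m}` and `h = ∑_m θ_m b_{μ,m}`. -/
structure MIPSX (Ω : Type*) [MeasurableSpace Ω] (P : Measure Ω)
    (T σ cb Lb : ℝ) (p : ℕ) (θ : Fin p → ℝ)
    (b : Fin p → ℝ → Measure ℝ → ℝ)
    (bx : Fin p → ℝ → Measure ℝ → ℝ) (bμ : Fin p → ℝ → Measure ℝ → ℝ → ℝ)
    (μ₀ : Measure ℝ)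
    (N : ℕ) (X B : Fin N → ℝ → Ω → ℝ) (X0 : Fin N → Ω → ℝ)
    (D : Fin N → Fin N → ℝ → ℝ → Ω → ℝ) : Prop where
  prob : IsProbabilityMeasure P
  hT : 0 < T
  hσ : 0 < σ
  hcb : 0 < cb
  hbmeas : ∀ m, Measurable fun z : ℝ × Measure ℝ => b m z.1 z.2
  hbLip : ∀ m x y μ ν, |b m x μ - b m y ν| ≤ cb * (|x - y| + W2 μ ν)
  hb0 : ∀ m, |b m 0 (Measure.dirac 0)| ≤ cb
  hbxmeas : ∀ m, Measurable fun z : ℝ × Measure ℝ => bx m z.1 z.2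
  hbxbd : ∀ m x μ, |bx m x μ| ≤ Lb
  hbxLip : ∀ m x y μ ν, |bx m x μ - bx m y ν| ≤ Lb * (|x - y| + W2 μ ν)
  hbμmeas : ∀ m, Measurable fun z : (ℝ × Measure ℝ) × ℝ => bμ m z.1.1 z.1.2 z.2
  hbμbd : ∀ m x μ z, |bμ m x μ z| ≤ Lb
  hbμLip : ∀ m x y μ ν z w,
    |bμ m x μ z - bμ m y ν w| ≤ Lb * (|x - y| + W2 μ ν + |z - w|)
  hBmeas : ∀ i, Measurable fun z : ℝ × Ω => B i z.1 z.2
  hBcont : ∀ᵐ ω ∂P, ∀ i, ContinuousOn (fun t => B i t ω) (Set.Icc 0 T)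
  hB0 : ∀ i, ∀ᵐ ω ∂P, B i 0 ω = 0
  hX0meas : ∀ i, Measurable (X0 i)
  hX0law : ∀ i, P.map (X0 i) = μ₀
  hX0indep : iIndepFun (m := fun _ => Real.measurableSpace) X0 P
  hmom : ∀ k : ℕ, Integrable (fun x : ℝ => |x| ^ k) μ₀
  hXmeas : ∀ i, Measurable fun z : ℝ × Ω => X i z.1 z.2
  hXcont : ∀ᵐ ω ∂P, ∀ i, ContinuousOn (fun t => X i t ω) (Set.Icc 0 T)
  hXeq : ∀ᵐ ω ∂P, ∀ i, ∀ t ∈ Set.Icc (0 : ℝ) T,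
    X i t ω = X0 i ω
      + (∫ s in (0 : ℝ)..t, ∑ m, θ m * b m (X i s ω) (empMeas fun j => X j s ω))
      + σ * B i t ω
  hDmeas : ∀ j i s, Measurable fun z : ℝ × Ω => D j i s z.1 z.2
  hDcont : ∀ᵐ ω ∂P, ∀ j i, ∀ s ∈ Set.Icc (0 : ℝ) T,
    ContinuousOn (fun t => D j i s t ω) (Set.Icc s T)
  hDeq : ∀ᵐ ω ∂P, ∀ j i, ∀ s ∈ Set.Icc (0 : ℝ) T, ∀ t ∈ Set.Icc s T,
    D j i s t ω = (if i = j then σ else 0)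
      + ∫ r in s..t,
          ((∑ m, θ m * bx m (X i r ω) (empMeas fun k => X k r ω)) * D j i s r ω
            + (N : ℝ)⁻¹ * ∑ k,
                (∑ m, θ m * bμ m (X i r ω) (empMeas fun k' => X k' r ω) (X k r ω))
                  * D j k s r ω)
  hDzero : ∀ᵐ ω ∂P, ∀ j i s t, t < s → D j i s t ω = 0

/-- Proposition 3.7: for `H ≥ 1/2` there are `c, N₀ > 0` such that for all
`N ≥ N₀`, almost surely, for all `0 ≤ s ≤ t ≤ T`, all `i` and all `m`,
`|D_s^i b_m(X^{i,N}_t, μ^N_t) − σ ∂ₓb_m(X^{i,N}_t, μ^N_t) exp(∫_s^t ⟨θ⁰, ∂ₓb(X^{i,N}_r, μ^N_r)⟩ dr)| ≤ c/N`. -/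
theorem statement10
    (Ω : Type*) [MeasurableSpace Ω] (P : Measure Ω)
    (T H σ cb Lb : ℝ) (hH : (1 / 2 : ℝ) ≤ H) (p : ℕ) (θ : Fin p → ℝ)
    (b : Fin p → ℝ → Measure ℝ → ℝ)
    (bx : Fin p → ℝ → Measure ℝ → ℝ) (bμ : Fin p → ℝ → Measure ℝ → ℝ → ℝ)
    (μ₀ : Measure ℝ) :
    ∃ c : ℝ, 0 < c ∧ ∃ N₀ : ℕ, 0 < N₀ ∧
      ∀ N : ℕ, N₀ ≤ N →
        ∀ (X B : Fin N → ℝ → Ω → ℝ) (X0 : Fin N → Ω → ℝ)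
          (D : Fin N → Fin N → ℝ → ℝ → Ω → ℝ),
          MIPSX Ω P T σ cb Lb p θ b bx bμ μ₀ N X B X0 D →
          ∀ᵐ ω ∂P, ∀ s t : ℝ, 0 ≤ s → s ≤ t → t ≤ T → ∀ (i : Fin N) (m : Fin p),
            |(bx m (X i t ω) (empMeas fun j => X j t ω) * D i i s t ω
                + (N : ℝ)⁻¹ * ∑ k, bμ m (X i t ω) (empMeas fun j => X j t ω)
                    (X k t ω) * D i k s t ω)
              - σ * bx m (X i t ω) (empMeas fun j => X j t ω)
                  * Real.exp (∫ r in s..t,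
                      ∑ m', θ m' * bx m' (X i r ω) (empMeas fun j => X j r ω))|
              ≤ c / N := by
    classical
  refine ⟨|Lb| * ((|σ| * Real.exp ((2 * ((∑ m', |θ m'|) * |Lb|) + 1) * |T|)
        + |σ| * Real.exp ((2 * ((∑ m', |θ m'|) * |Lb|) + 1) * |T|)
          * Real.exp ((2 * ((∑ m', |θ m'|) * |Lb|) + 1) * |T|))
      * Real.exp ((2 * ((∑ m', |θ m'|) * |Lb|) + 1) * |T|)
      + |σ| * Real.exp ((2 * ((∑ m', |θ m'|) * |Lb|) + 1) * |T|)
      + |σ| * Real.exp ((2 * ((∑ m', |θ m'|) * |Lb|) + 1) * |T|)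
        * Real.exp ((2 * ((∑ m', |θ m'|) * |Lb|) + 1) * |T|)) + 1, ?_, 1,
    one_pos, ?_⟩
  · positivity
  · intro N hN X B X0 D hM
    have hN0 : 0 < N := hN
    filter_upwards [hM.hXcont, hM.hDcont, hM.hDeq] with ω hXc hDc hDe
    intro s t hs hst htT i m
    have hsT : s ≤ T := le_trans hst htT
    exact pathwise hN0 hM.hbxbd hM.hbxLip hM.hbμbd hM.hbμLip
      (fun j r => X j r ω) (fun k r => D i k s r ω) hXc hs hsT
      (fun k => hDc i k s ⟨hs, hsT⟩)
      (fun k t' ht' => hDe i k s ⟨hs, hsT⟩ t' ht') hst htT m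
end
end

section
/- Fix N ∈ ℕ, 0 ≤ s ≤ T, j ∈ {1,…,N}, σ > 0 and L ≥ 0. Let a^i, c^{i,k} : [s,T] → ℝ be measurable with |a^i(r)| ≤ L and |c^{i,k}(r)| ≤ L, and let d¹,…,d^N : [s,T] → ℝ be continuous functions satisfying d^i(t) = σ·1_{i=j} + ∫_s^t ( a^i(r) d^i(r) + N^{−1} ∑_{k=1}^N c^{i,k}(r) d^k(r) ) dr for all t ∈ [s,T]. Then there exists a constant C depending only on σ, L, T (not on N, s, j) such that for all t ∈ [s,T]: |d^j(t) − σ exp(∫_s^t a^j(r) dr)| ≤ C/N. -/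
open MeasureTheory intervalIntegral Set

namespace Statement11Aux

lemma integrableOn_of_bound {f : ℝ → ℝ} {u v M : ℝ}
    (hf : AEStronglyMeasurable f (volume.restrict (Icc u v)))
    (hb : ∀ r ∈ Icc u v, |f r| ≤ M) : IntegrableOn f (Icc u v) := by
  refine Integrable.mono' (g := fun _ => M) (integrableOn_const measure_Icc_lt_top.ne) hf ?_
  refine (ae_restrict_iff' measurableSet_Icc).2 (ae_of_all _ fun r hr => ?_)
  simpa [Real.norm_eq_abs] using hb r hr

lemma intervalIntegrable_of_bound {f : ℝ → ℝ} {s T M : ℝ}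
    (hf : AEStronglyMeasurable f (volume.restrict (Icc s T)))
    (hb : ∀ r ∈ Icc s T, |f r| ≤ M) {t : ℝ} (hst : s ≤ t) (htT : t ≤ T) :
    IntervalIntegrable f volume s t :=
  (intervalIntegrable_iff_integrableOn_Icc_of_le hst).2
    ((integrableOn_of_bound hf hb).mono_set (Icc_subset_Icc le_rfl htT))

lemma intervalIntegrable_of_measurable_bound {f : ℝ → ℝ} {L : ℝ}
    (hf : Measurable f) (hb : ∀ r, |f r| ≤ L) (u v : ℝ) :
    IntervalIntegrable f volume u v := by
  rw [intervalIntegrable_iff]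
  refine Integrable.mono' (g := fun _ => L) (integrableOn_const ?_)
    hf.aestronglyMeasurable.restrict (ae_of_all _ fun r => by simpa [Real.norm_eq_abs] using hb r)
  simp only [uIoc]
  exact measure_Ioc_lt_top.ne

lemma exp_lip {x y M : ℝ} (hx : x ≤ M) (hy : y ≤ M) :
    |Real.exp x - Real.exp y| ≤ Real.exp M * |x - y| := by
  wlog hxy : y ≤ x generalizing x y
  · rw [abs_sub_comm, abs_sub_comm x y]; exact this hy hx (le_of_not_ge hxy)
  have h1 : Real.exp (y - x) * Real.exp x = Real.exp y := by rw [← Real.exp_add]; ring_nf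
  have h2 := Real.add_one_le_exp (y - x)
  have h3 := Real.exp_pos x
  have h4 : Real.exp x ≤ Real.exp M := Real.exp_le_exp.2 hx
  rw [abs_of_nonneg (sub_nonneg.2 (Real.exp_le_exp.2 hxy)), abs_of_nonneg (sub_nonneg.2 hxy)]
  nlinarith

lemma gronwall_int {φ : ℝ → ℝ} {s T A K : ℝ} (hsT : s ≤ T) (hK : 0 < K)
    (hφ : ContinuousOn φ (Icc s T)) (hφ0 : ∀ r ∈ Icc s T, 0 ≤ φ r)
    (h : ∀ t ∈ Icc s T, φ t ≤ A + K * ∫ r in s..t, φ r) :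
    ∀ t ∈ Icc s T, φ t ≤ A * Real.exp (K * (t - s)) := by
  set g : ℝ → ℝ := fun x => φ ((projIcc s T hsT x : Icc s T) : ℝ) with hg_def
  have hg : Continuous g :=
    hφ.comp_continuous (continuous_subtype_val.comp (continuous_projIcc)) fun x =>
      (projIcc s T hsT x).2
  have hgφ : EqOn g φ (Icc s T) := fun x hx => by
    simp only [hg_def, projIcc_of_mem hsT hx]
  set ψ : ℝ → ℝ := fun t => ∫ r in s..t, g r with hψ_def
  have hψc : Continuous ψ :=
    intervalIntegral.continuous_primitive (fun u v => hg.intervalIntegrable u v) s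
  have hψd : ∀ x : ℝ, HasDerivAt ψ (g x) x := fun x =>
    integral_hasDerivAt_right (hg.intervalIntegrable s x)
      hg.stronglyMeasurable.stronglyMeasurableAtFilter hg.continuousAt
  have hint : ∀ t ∈ Icc s T, (∫ r in s..t, φ r) = ψ t := by
    intro t ht
    refine intervalIntegral.integral_congr fun x hx => (hgφ ?_).symm
    rw [uIcc_of_le ht.1] at hx
    exact ⟨hx.1, hx.2.trans ht.2⟩
  have key : ∀ x ∈ Icc s T, ‖ψ x‖ ≤ gronwallBound 0 K A (x - s) := by
    refine norm_le_gronwallBound_of_norm_deriv_right_le hψc.continuousOn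
      (fun x _ => (hψd x).hasDerivWithinAt) ?_ ?_
    · simp [hψ_def]
    · intro x hx
      have hx' : x ∈ Icc s T := Ico_subset_Icc_self hx
      have h1 : φ x ≤ A + K * ψ x := by rw [← hint x hx']; exact h x hx'
      have h2 : ψ x ≤ ‖ψ x‖ := le_abs_self _
      have h3 : ‖g x‖ = φ x := by
        rw [Real.norm_eq_abs, hgφ hx', abs_of_nonneg (hφ0 x hx')]
      rw [h3]
      nlinarith
  intro t ht
  have h1 : φ t ≤ A + K * ψ t := by rw [← hint t ht]; exact h t ht
  have h3 := key t ht
  rw [gronwallBound_of_K_ne_0 hK.ne'] at h3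
  have h2 : ψ t ≤ ‖ψ t‖ := le_abs_self _
  have h4 : K * (A / K) = A := by field_simp
  nlinarith [Real.exp_pos (K * (t - s))]

lemma exp_volterra {L : ℝ} {a : ℝ → ℝ} (ha : Measurable a) (hab : ∀ r, |a r| ≤ L)
    {s t : ℝ} (hst : s ≤ t) :
    Real.exp (∫ r in s..t, a r) = 1 + ∫ r in s..t, a r * Real.exp (∫ u in s..r, a u) := by
  have hL : 0 ≤ L := (abs_nonneg _).trans (hab 0)
  have haii : ∀ u v : ℝ, IntervalIntegrable a volume u v :=
    intervalIntegrable_of_measurable_bound ha hab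
  set G : ℝ → ℝ := fun r => ∫ u in s..r, a u with hGdef
  have hGc : Continuous G := intervalIntegral.continuous_primitive haii s
  set M := L * (t - s) with hMdef
  have hM0 : 0 ≤ M := mul_nonneg hL (by linarith)
  have habsint : ∀ (b : ℝ → ℝ), (∀ r, |b r| ≤ L) → (∀ u v, IntervalIntegrable b volume u v) →
      ∀ r ∈ Icc s t, |∫ u in s..r, b u| ≤ M := by
    intro b hbb hbii r hr
    calc |∫ u in s..r, b u| ≤ ∫ u in s..r, |b u| := abs_integral_le_integral_abs hr.1
      _ ≤ ∫ u in s..r, L :=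
        integral_mono_on hr.1 (hbii s r).abs intervalIntegrable_const (fun x _ => hbb x)
      _ = L * (r - s) := by simp [mul_comm]
      _ ≤ M := by rw [hMdef]; nlinarith [hr.2, hr.1]
  have hGM : ∀ r ∈ Icc s t, |G r| ≤ M := habsint a hab haii
  have haeG : IntervalIntegrable (fun r => a r * Real.exp (G r)) volume s t := by
    refine intervalIntegrable_of_bound (M := L * Real.exp M)
      ((ha.mul (Real.continuous_exp.comp hGc).measurable).aestronglyMeasurable.restrict) ?_ hst le_rfl
    intro r hr
    show |a r * Real.exp (G r)| ≤ L * Real.exp M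
    rw [abs_mul, Real.abs_exp]
    have := (abs_le.1 (hGM r hr)).2
    exact mul_le_mul (hab r) (Real.exp_le_exp.2 this) (Real.exp_pos _).le hL
  set X := Real.exp (G t) - 1 - ∫ r in s..t, a r * Real.exp (G r) with hXdef
  suffices hX : ∀ ε > (0:ℝ), |X| ≤ (2 + M) * Real.exp M * ε by
    have hc : (0:ℝ) < (2 + M) * Real.exp M := by positivity
    have hX0 : X = 0 := by
      by_contra h0
      have h1 : 0 < |X| := abs_pos.2 h0
      have := hX (|X| / (2 * ((2 + M) * Real.exp M))) (by positivity)
      have hcne : (2 + M) * Real.exp M ≠ 0 := hc.ne'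
      have h2 : (2 + M) * Real.exp M * (|X| / (2 * ((2 + M) * Real.exp M))) = |X| / 2 := by
        field_simp
      rw [h2] at this; linarith
    have := sub_eq_zero.1 (by linarith [hX0] :
      Real.exp (G t) - (1 + ∫ r in s..t, a r * Real.exp (G r)) = 0)
    exact this
  intro ε hε
  set f : ℝ → ℝ := (Icc s t).indicator a with hfdef
  have hf_int : Integrable f volume := by
    rw [hfdef, integrable_indicator_iff measurableSet_Icc]
    exact integrableOn_of_bound ha.aestronglyMeasurable.restrict (fun r _ => hab r)
  obtain ⟨g, -, hgε, hgc, hgi⟩ := hf_int.exists_hasCompactSupport_integral_sub_le hε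
  set b : ℝ → ℝ := fun r => max (-L) (min L (g r)) with hbdef
  have hbc : Continuous b := continuous_const.max (continuous_const.min hgc)
  have hbb : ∀ r, |b r| ≤ L := fun r =>
    abs_le.2 ⟨le_max_left _ _, max_le (by linarith) (min_le_left _ _)⟩
  have hclamp : ∀ x y : ℝ, |max (-L) (min L x) - max (-L) (min L y)| ≤ |x - y| := by
    intro x y
    calc |max (-L) (min L x) - max (-L) (min L y)|
        = |max (min L x) (-L) - max (min L y) (-L)| := by rw [max_comm (-L), max_comm (-L)]
      _ ≤ |min L x - min L y| := abs_max_sub_max_le_abs _ _ _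
      _ ≤ max |L - L| |x - y| := abs_min_sub_min_le_max _ _ _ _
      _ ≤ |x - y| := by simp
  have hpt : ∀ r ∈ Icc s t, |a r - b r| ≤ ‖f r - g r‖ := by
    intro r hr
    have h1 : f r = a r := indicator_of_mem hr _
    have h2 : a r = max (-L) (min L (a r)) := by
      have h3 := abs_le.1 (hab r)
      rw [min_eq_right h3.2, max_eq_right h3.1]
    rw [Real.norm_eq_abs, h1]
    calc |a r - b r| = |max (-L) (min L (a r)) - max (-L) (min L (g r))| := by rw [← h2, hbdef]
      _ ≤ |a r - g r| := hclamp _ _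
  have hbii : ∀ u v, IntervalIntegrable b volume u v := fun u v => hbc.intervalIntegrable u v
  set δ := ∫ r in s..t, |a r - b r| with hδdef
  have habii : IntervalIntegrable (fun r => |a r - b r|) volume s t :=
    ((haii s t).sub (hbii s t)).abs
  have hδ0 : 0 ≤ δ := integral_nonneg hst fun x _ => abs_nonneg _
  have hδε : δ ≤ ε := by
    have h1 : δ ≤ ∫ r in s..t, ‖f r - g r‖ := by
      refine integral_mono_on hst habii
        ((intervalIntegrable_iff_integrableOn_Icc_of_le hst).2 ((hf_int.sub hgi).norm.integrableOn))
        hpt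
    have h2 : (∫ r in s..t, ‖f r - g r‖) ≤ ∫ r, ‖f r - g r‖ := by
      rw [integral_of_le hst]
      refine setIntegral_le_integral (hf_int.sub hgi).norm (ae_of_all _ fun x => norm_nonneg _)
    linarith
  set Gb : ℝ → ℝ := fun r => ∫ u in s..r, b u with hGbdef
  have hGbc : Continuous Gb := intervalIntegral.continuous_primitive hbii s
  have hGbM : ∀ r ∈ Icc s t, |Gb r| ≤ M := habsint b hbb hbii
  have hGbd : ∀ x, HasDerivAt Gb (b x) x := fun x =>
    integral_hasDerivAt_right (hbii s x) hbc.stronglyMeasurable.stronglyMeasurableAtFilter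
      hbc.continuousAt
  have hid : (∫ r in s..t, b r * Real.exp (Gb r)) = Real.exp (Gb t) - 1 := by
    have h1 : ∀ x ∈ uIcc s t, HasDerivAt (fun r => Real.exp (Gb r)) (b x * Real.exp (Gb x)) x :=
      fun x _ => by simpa [mul_comm] using (hGbd x).exp
    have h2 := integral_eq_sub_of_hasDerivAt h1
      ((hbc.mul (Real.continuous_exp.comp hGbc)).intervalIntegrable s t)
    simpa [hGbdef] using h2
  have hGdiff : ∀ r ∈ Icc s t, |G r - Gb r| ≤ δ := by
    intro r hr
    have h1 : G r - Gb r = ∫ u in s..r, (a u - b u) :=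
      (integral_sub (haii s r) (hbii s r)).symm
    rw [h1]
    calc |∫ u in s..r, (a u - b u)| ≤ ∫ u in s..r, |a u - b u| :=
        abs_integral_le_integral_abs hr.1
      _ ≤ δ := integral_mono_interval le_rfl hr.1 hr.2
          (ae_of_all _ fun x => abs_nonneg _) habii
  have htmem : t ∈ Icc s t := ⟨hst, le_rfl⟩
  have hptw : ∀ r ∈ Icc s t,
      |b r * Real.exp (Gb r) - a r * Real.exp (G r)|
        ≤ |a r - b r| * Real.exp M + L * (Real.exp M * δ) := by
    intro r hr
    have hGle : G r ≤ M := (abs_le.1 (hGM r hr)).2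
    have hGble : Gb r ≤ M := (abs_le.1 (hGbM r hr)).2
    have h1 : |b r * Real.exp (Gb r) - a r * Real.exp (G r)|
        ≤ |b r - a r| * Real.exp (Gb r) + |a r| * |Real.exp (Gb r) - Real.exp (G r)| := by
      have : b r * Real.exp (Gb r) - a r * Real.exp (G r)
          = (b r - a r) * Real.exp (Gb r) + a r * (Real.exp (Gb r) - Real.exp (G r)) := by ring
      rw [this]
      exact (abs_add_le _ _).trans (by rw [abs_mul, abs_mul, Real.abs_exp])
    have h2 : |Real.exp (Gb r) - Real.exp (G r)| ≤ Real.exp M * δ := by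
      refine (exp_lip hGble hGle).trans ?_
      have := hGdiff r hr
      rw [abs_sub_comm] at this
      exact mul_le_mul_of_nonneg_left this (Real.exp_pos M).le
    have h3 : |b r - a r| * Real.exp (Gb r) ≤ |a r - b r| * Real.exp M := by
      rw [abs_sub_comm]
      exact mul_le_mul_of_nonneg_left (Real.exp_le_exp.2 hGble) (abs_nonneg _) |>.trans
        (le_of_eq (mul_comm _ _)) |>.trans (le_of_eq (mul_comm _ _))
    have h4 : |a r| * |Real.exp (Gb r) - Real.exp (G r)| ≤ L * (Real.exp M * δ) :=
      mul_le_mul (hab r) h2 (abs_nonneg _) hL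
    linarith
  have hbeG : IntervalIntegrable (fun r => b r * Real.exp (Gb r)) volume s t :=
    (hbc.mul (Real.continuous_exp.comp hGbc)).intervalIntegrable s t
  have hXeq : X = (Real.exp (G t) - Real.exp (Gb t))
      + ∫ r in s..t, (b r * Real.exp (Gb r) - a r * Real.exp (G r)) := by
    rw [hXdef, integral_sub hbeG haeG, hid]; ring
  have hb1 : |Real.exp (G t) - Real.exp (Gb t)| ≤ Real.exp M * δ := by
    refine (exp_lip (abs_le.1 (hGM t htmem)).2 (abs_le.1 (hGbM t htmem)).2).trans ?_
    exact mul_le_mul_of_nonneg_left (hGdiff t htmem) (Real.exp_pos M).le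
  have hb2 : |∫ r in s..t, (b r * Real.exp (Gb r) - a r * Real.exp (G r))|
      ≤ Real.exp M * δ + L * (Real.exp M * δ) * (t - s) := by
    calc |∫ r in s..t, (b r * Real.exp (Gb r) - a r * Real.exp (G r))|
        ≤ ∫ r in s..t, |b r * Real.exp (Gb r) - a r * Real.exp (G r)| :=
          abs_integral_le_integral_abs hst
      _ ≤ ∫ r in s..t, (|a r - b r| * Real.exp M + L * (Real.exp M * δ)) := by
          refine integral_mono_on hst (hbeG.sub haeG).abs ?_ hptw
          exact (habii.mul_const _).add intervalIntegrable_const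
      _ = Real.exp M * δ + L * (Real.exp M * δ) * (t - s) := by
          rw [integral_add (habii.mul_const _) intervalIntegrable_const,
            intervalIntegral.integral_mul_const, intervalIntegral.integral_const, smul_eq_mul, ← hδdef]
          ring
  have hMε : L * (Real.exp M * δ) * (t - s) = M * Real.exp M * δ := by rw [hMdef]; ring
  have habs : |X| ≤ (2 + M) * Real.exp M * δ := by
    calc |X| ≤ |Real.exp (G t) - Real.exp (Gb t)|
        + |∫ r in s..t, (b r * Real.exp (Gb r) - a r * Real.exp (G r))| := by
          rw [hXeq]; exact abs_add_le _ _
      _ ≤ Real.exp M * δ + (Real.exp M * δ + L * (Real.exp M * δ) * (t - s)) := by linarith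
      _ = (2 + M) * Real.exp M * δ := by rw [hMε]; ring
  refine habs.trans ?_
  have : (0:ℝ) ≤ (2 + M) * Real.exp M := by positivity
  exact mul_le_mul_of_nonneg_left hδε this

end Statement11Aux

open Statement11Aux

/-- Proposition 4.1 mechanism: the diagonal solution `d^j` of the
linear Volterra system characterizing `D_s^j X^{i,N}_t` is within `C/N` of the exponential
`σ exp(∫_s^t a^j(r) dr)`, with `C` depending only on `σ`, `L`, `T`. -/
theorem statement11 (σ L T : ℝ) (hσ : 0 < σ) (hL : 0 ≤ L) (hT : 0 ≤ T) :
    ∃ C : ℝ,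
      ∀ (N : ℕ), 0 < N → ∀ (s : ℝ), 0 ≤ s → s ≤ T → ∀ (j : Fin N)
        (a : Fin N → ℝ → ℝ) (c : Fin N → Fin N → ℝ → ℝ) (d : Fin N → ℝ → ℝ),
        (∀ i, Measurable (a i)) →
        (∀ i k, Measurable (c i k)) →
        (∀ i, ∀ r ∈ Set.Icc s T, |a i r| ≤ L) →
        (∀ i k, ∀ r ∈ Set.Icc s T, |c i k r| ≤ L) →
        (∀ i, ContinuousOn (d i) (Set.Icc s T)) →
        (∀ i, ∀ t ∈ Set.Icc s T,
          d i t = (if i = j then σ else 0)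
            + ∫ r in s..t, (a i r * d i r + (N : ℝ)⁻¹ * ∑ k, c i k r * d k r)) →
        ∀ t ∈ Set.Icc s T,
          |d j t - σ * Real.exp (∫ r in s..t, a j r)| ≤ C / N := by
  classical
  set B := σ * Real.exp ((2 * L + 1) * T) with hBdef
  have hBpos : 0 < B := by positivity
  refine ⟨L * B * T * Real.exp ((L + 1) * T), ?_⟩
  intro N hN s hs0 hsT j a c d ham hcm haL hcL hdc hde t ht
  obtain ⟨hst, htT⟩ := ht
  have hNpos : (0:ℝ) < (N:ℝ) := by exact_mod_cast hN
  have hNinv0 : (0:ℝ) ≤ (N:ℝ)⁻¹ := by positivity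
  have hNinv1 : (N:ℝ)⁻¹ ≤ 1 := by
    rw [inv_le_one_iff₀]
    right
    exact_mod_cast hN
  -- measurability of d on the interval
  have hdm : ∀ i, AEStronglyMeasurable (d i) (volume.restrict (Icc s T)) := fun i =>
    ((hdc i).aemeasurable measurableSet_Icc).aestronglyMeasurable
  -- the total mass function S
  set S : ℝ → ℝ := fun r => ∑ i, |d i r| with hSdef
  have hScont : ContinuousOn S (Icc s T) :=
    continuousOn_finset_sum _ (fun i _ => (hdc i).abs)
  have hS0 : ∀ r ∈ Icc s T, 0 ≤ S r := fun r _ => Finset.sum_nonneg fun i _ => abs_nonneg _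
  obtain ⟨B0, hB0b⟩ := isCompact_Icc.exists_bound_of_continuousOn hScont
  have hSB0 : ∀ r ∈ Icc s T, S r ≤ B0 := fun r hr => (le_abs_self _).trans (hB0b r hr)
  have hB00 : 0 ≤ B0 := (hS0 s ⟨le_rfl, hsT⟩).trans (hSB0 s ⟨le_rfl, hsT⟩)
  have hdS : ∀ i, ∀ r, |d i r| ≤ S r := fun i r =>
    Finset.single_le_sum (f := fun k => |d k r|) (fun k _ => abs_nonneg _) (Finset.mem_univ i)
  -- the integrand of the Volterra equation
  set F : Fin N → ℝ → ℝ :=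
    fun i r => a i r * d i r + (N:ℝ)⁻¹ * ∑ k, c i k r * d k r with hFdef
  have hFm : ∀ i, AEStronglyMeasurable (F i) (volume.restrict (Icc s T)) := fun i =>
    (((ham i).aestronglyMeasurable.restrict.mul (hdm i)).add
      (aestronglyMeasurable_const.mul (Finset.aestronglyMeasurable_fun_sum _ fun k _ =>
        (hcm i k).aestronglyMeasurable.restrict.mul (hdm k))))
  have hsumb : ∀ i, ∀ r ∈ Icc s T, |∑ k, c i k r * d k r| ≤ L * S r := by
    intro i r hr
    refine (Finset.abs_sum_le_sum_abs _ _).trans ?_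
    rw [hSdef, Finset.mul_sum]
    refine Finset.sum_le_sum fun k _ => ?_
    rw [abs_mul]
    exact mul_le_mul_of_nonneg_right (hcL i k r hr) (abs_nonneg _)
  have hFb : ∀ i, ∀ r ∈ Icc s T, |F i r| ≤ L * |d i r| + (N:ℝ)⁻¹ * (L * S r) := by
    intro i r hr
    refine (abs_add_le _ _).trans ?_
    rw [abs_mul, abs_mul, abs_of_nonneg hNinv0]
    exact add_le_add (mul_le_mul_of_nonneg_right (haL i r hr) (abs_nonneg _))
      (mul_le_mul_of_nonneg_left (hsumb i r hr) hNinv0)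
  have hFbM : ∀ i, ∀ r ∈ Icc s T, |F i r| ≤ L * B0 + L * B0 := by
    intro i r hr
    refine (hFb i r hr).trans (add_le_add ?_ ?_)
    · exact mul_le_mul_of_nonneg_left ((hdS i r).trans (hSB0 r hr)) hL
    · calc (N:ℝ)⁻¹ * (L * S r) ≤ 1 * (L * S r) :=
          mul_le_mul_of_nonneg_right hNinv1 (mul_nonneg hL (hS0 r hr))
        _ = L * S r := one_mul _
        _ ≤ L * B0 := mul_le_mul_of_nonneg_left (hSB0 r hr) hL
  have hFii : ∀ i, ∀ t' ∈ Icc s T, IntervalIntegrable (F i) volume s t' := fun i t' ht' =>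
    intervalIntegrable_of_bound (hFm i) (hFbM i) ht'.1 ht'.2
  -- the dominating continuous integrands are interval integrable
  have hGdc : ∀ i, ContinuousOn (fun r => L * |d i r| + (N:ℝ)⁻¹ * (L * S r)) (Icc s T) :=
    fun i => (continuousOn_const.mul (hdc i).abs).add
      (continuousOn_const.mul (continuousOn_const.mul hScont))
  have hGdii : ∀ i, ∀ t' ∈ Icc s T,
      IntervalIntegrable (fun r => L * |d i r| + (N:ℝ)⁻¹ * (L * S r)) volume s t' :=
    fun i t' ht' => ContinuousOn.intervalIntegrable_of_Icc ht'.1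
      ((hGdc i).mono (Icc_subset_Icc le_rfl ht'.2))
  -- Step 1: Gronwall bound for S
  have key1 : ∀ t' ∈ Icc s T, S t' ≤ σ + (2 * L + 1) * ∫ r in s..t', S r := by
    intro t' ht'
    have h1 : ∀ i, |d i t'|
        ≤ (if i = j then σ else 0) + ∫ r in s..t', (L * |d i r| + (N:ℝ)⁻¹ * (L * S r)) := by
      intro i
      rw [hde i t' ht']
      refine (abs_add_le _ _).trans (add_le_add ?_ ?_)
      · split_ifs <;> simp [abs_of_nonneg hσ.le]
      · refine (abs_integral_le_integral_abs ht'.1).trans ?_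
        exact integral_mono_on ht'.1 (hFii i t' ht').abs (hGdii i t' ht')
          (fun r hr => hFb i r ⟨hr.1, hr.2.trans ht'.2⟩)
    calc S t' ≤ ∑ i, ((if i = j then σ else 0)
          + ∫ r in s..t', (L * |d i r| + (N:ℝ)⁻¹ * (L * S r))) :=
        Finset.sum_le_sum fun i _ => h1 i
      _ = σ + ∑ i, ∫ r in s..t', (L * |d i r| + (N:ℝ)⁻¹ * (L * S r)) := by
        rw [Finset.sum_add_distrib]
        congr 1
        simp
      _ = σ + ∫ r in s..t', ∑ i, (L * |d i r| + (N:ℝ)⁻¹ * (L * S r)) := by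
        rw [intervalIntegral.integral_finset_sum (fun i _ => hGdii i t' ht')]
      _ = σ + ∫ r in s..t', (2 * L) * S r := by
        congr 1
        refine intervalIntegral.integral_congr fun r _ => ?_
        rw [Finset.sum_add_distrib, Finset.sum_const, ← Finset.mul_sum]
        simp only [Finset.card_univ, Fintype.card_fin, nsmul_eq_mul]
        rw [hSdef]
        field_simp
        ring
      _ ≤ σ + (2 * L + 1) * ∫ r in s..t', S r := by
        rw [intervalIntegral.integral_const_mul]
        have hSint : 0 ≤ ∫ r in s..t', S r :=
          intervalIntegral.integral_nonneg ht'.1 fun r hr =>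
            hS0 r ⟨hr.1, hr.2.trans ht'.2⟩
        nlinarith
  have hSB : ∀ t' ∈ Icc s T, S t' ≤ B := by
    intro t' ht'
    have := gronwall_int hsT (by linarith : (0:ℝ) < 2 * L + 1) hScont hS0 key1 t' ht'
    refine this.trans ?_
    rw [hBdef]
    refine mul_le_mul_of_nonneg_left (Real.exp_le_exp.2 ?_) hσ.le
    have : t' - s ≤ T := by
      have := ht'.2
      linarith
    nlinarith
  -- Step 2: the exponential solves the homogeneous equation
  set a' : ℝ → ℝ := fun r => max (-L) (min L (a j r)) with ha'def
  have ha'm : Measurable a' := measurable_const.max (measurable_const.min (ham j))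
  have ha'b : ∀ r, |a' r| ≤ L := fun r =>
    abs_le.2 ⟨le_max_left _ _, max_le (by linarith) (min_le_left _ _)⟩
  have ha'eq : EqOn a' (a j) (Icc s T) := by
    intro r hr
    have h3 := abs_le.1 (haL j r hr)
    rw [ha'def]
    simp only
    rw [min_eq_right h3.2, max_eq_right h3.1]
  have ha'ii : ∀ u v, IntervalIntegrable a' volume u v :=
    intervalIntegrable_of_measurable_bound ha'm ha'b
  set E : ℝ → ℝ := fun r => σ * Real.exp (∫ u in s..r, a' u) with hEdef
  have hEc : Continuous E :=
    continuous_const.mul (Real.continuous_exp.comp (intervalIntegral.continuous_primitive ha'ii s))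
  have hIcongr : ∀ r ∈ Icc s T, (∫ u in s..r, a j u) = ∫ u in s..r, a' u := by
    intro r hr
    refine intervalIntegral.integral_congr fun x hx => ?_
    rw [uIcc_of_le hr.1] at hx
    exact (ha'eq ⟨hx.1, hx.2.trans hr.2⟩).symm
  have hEeq : ∀ r ∈ Icc s T, σ * Real.exp (∫ u in s..r, a j u) = E r := by
    intro r hr
    rw [hEdef, hIcongr r hr]
  have hEb : ∀ r ∈ Icc s T, |E r| ≤ σ * Real.exp (L * T) := by
    intro r hr
    rw [hEdef]
    simp only
    rw [abs_mul, abs_of_nonneg hσ.le, Real.abs_exp]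
    refine mul_le_mul_of_nonneg_left (Real.exp_le_exp.2 ?_) hσ.le
    have h1 : (∫ u in s..r, a' u) ≤ ∫ u in s..r, L := by
      refine le_trans (le_abs_self _) ?_
      refine (abs_integral_le_integral_abs hr.1).trans ?_
      exact integral_mono_on hr.1 (ha'ii s r).abs intervalIntegrable_const (fun x _ => ha'b x)
    have h2 : (∫ u in s..r, (L:ℝ)) = L * (r - s) := by simp [mul_comm]
    rw [h2] at h1
    nlinarith [hr.1, hr.2, hs0]
  have hEid : ∀ t' ∈ Icc s T, E t' = σ + ∫ r in s..t', a j r * E r := by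
    intro t' ht'
    have h1 := exp_volterra ha'm ha'b ht'.1
    have h2 : E t' = σ * (1 + ∫ r in s..t', a' r * Real.exp (∫ u in s..r, a' u)) := by
      rw [hEdef]; simp only; rw [h1]
    rw [h2, mul_add, mul_one, ← intervalIntegral.integral_const_mul]
    congr 1
    refine intervalIntegral.integral_congr fun r hr => ?_
    rw [uIcc_of_le ht'.1] at hr
    have hrT : r ∈ Icc s T := ⟨hr.1, hr.2.trans ht'.2⟩
    rw [ha'eq hrT, hEdef]
    simp only
    ring
  -- Step 3: Gronwall for the error
  set e : ℝ → ℝ := fun r => d j r - E r with hedef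
  have hecont : ContinuousOn (fun r => |e r|) (Icc s T) := ((hdc j).sub hEc.continuousOn).abs
  have haEii : ∀ t' ∈ Icc s T, IntervalIntegrable (fun r => a j r * E r) volume s t' := by
    intro t' ht'
    refine intervalIntegrable_of_bound (M := L * (σ * Real.exp (L * T)))
      ((ham j).aestronglyMeasurable.restrict.mul hEc.aestronglyMeasurable.restrict) ?_ ht'.1 ht'.2
    intro r hr
    show |a j r * E r| ≤ L * (σ * Real.exp (L * T))
    rw [abs_mul]
    exact mul_le_mul (haL j r hr) (hEb r hr) (abs_nonneg _) hL
  have key3 : ∀ t' ∈ Icc s T,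
      |e t'| ≤ (N:ℝ)⁻¹ * (L * B * T) + (L + 1) * ∫ r in s..t', |e r| := by
    intro t' ht'
    have h1 : e t' = ∫ r in s..t', (F j r - a j r * E r) := by
      rw [hedef]
      simp only
      rw [hde j t' ht', hEid t' ht', if_pos rfl,
        integral_sub (hFii j t' ht') (haEii t' ht')]
      ring
    have hptw : ∀ r ∈ Icc s t', |F j r - a j r * E r| ≤ L * |e r| + (N:ℝ)⁻¹ * (L * B) := by
      intro r hr
      have hrT : r ∈ Icc s T := ⟨hr.1, hr.2.trans ht'.2⟩
      have h2 : F j r - a j r * E r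
          = a j r * e r + (N:ℝ)⁻¹ * ∑ k, c j k r * d k r := by
        rw [hFdef, hedef]; simp only; ring
      rw [h2]
      refine (abs_add_le _ _).trans ?_
      rw [abs_mul, abs_mul, abs_of_nonneg hNinv0]
      refine add_le_add (mul_le_mul_of_nonneg_right (haL j r hrT) (abs_nonneg _)) ?_
      refine mul_le_mul_of_nonneg_left ((hsumb j r hrT).trans ?_) hNinv0
      exact mul_le_mul_of_nonneg_left (hSB r hrT) hL
    have heii : IntervalIntegrable (fun r => |e r|) volume s t' :=
      ContinuousOn.intervalIntegrable_of_Icc ht'.1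
        (hecont.mono (Icc_subset_Icc le_rfl ht'.2))
    have hgii : IntervalIntegrable (fun r => L * |e r| + (N:ℝ)⁻¹ * (L * B)) volume s t' :=
      (heii.const_mul _).add intervalIntegrable_const
    have h3 : |e t'| ≤ ∫ r in s..t', (L * |e r| + (N:ℝ)⁻¹ * (L * B)) := by
      rw [h1]
      refine (abs_integral_le_integral_abs ht'.1).trans ?_
      exact integral_mono_on ht'.1 ((hFii j t' ht').sub (haEii t' ht')).abs hgii hptw
    have h4 : (∫ r in s..t', (L * |e r| + (N:ℝ)⁻¹ * (L * B)))
        = L * (∫ r in s..t', |e r|) + (N:ℝ)⁻¹ * (L * B) * (t' - s) := by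
      rw [integral_add (heii.const_mul _) intervalIntegrable_const,
        intervalIntegral.integral_const_mul, intervalIntegral.integral_const, smul_eq_mul]
      ring
    have h5 : 0 ≤ ∫ r in s..t', |e r| :=
      intervalIntegral.integral_nonneg ht'.1 fun r _ => abs_nonneg _
    have h6 : t' - s ≤ T := by have := ht'.2; linarith
    have h8 : (N:ℝ)⁻¹ * (L * B) * (t' - s) ≤ (N:ℝ)⁻¹ * (L * B * T) := by
      calc (N:ℝ)⁻¹ * (L * B) * (t' - s) ≤ (N:ℝ)⁻¹ * (L * B) * T :=
            mul_le_mul_of_nonneg_left h6 (by positivity)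
        _ = (N:ℝ)⁻¹ * (L * B * T) := by ring
    rw [h4] at h3
    nlinarith
  -- conclude
  have hfinal := gronwall_int hsT (by linarith : (0:ℝ) < L + 1) hecont
    (fun r _ => abs_nonneg _) key3 t ⟨hst, htT⟩
  have hgoal : |d j t - σ * Real.exp (∫ r in s..t, a j r)| = |e t| := by
    rw [hedef]; simp only; rw [hEeq t ⟨hst, htT⟩]
  rw [hgoal]
  refine hfinal.trans ?_
  have h10 : Real.exp ((L + 1) * (t - s)) ≤ Real.exp ((L + 1) * T) := by
    refine Real.exp_le_exp.2 ?_
    have h12 : t - s ≤ T := by linarith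
    nlinarith
  have h11 : (0:ℝ) ≤ (N:ℝ)⁻¹ * (L * B * T) := by positivity
  calc (N:ℝ)⁻¹ * (L * B * T) * Real.exp ((L + 1) * (t - s))
      ≤ (N:ℝ)⁻¹ * (L * B * T) * Real.exp ((L + 1) * T) :=
        mul_le_mul_of_nonneg_left h10 h11
    _ = L * B * T * Real.exp ((L + 1) * T) / N := by
        rw [div_eq_mul_inv]; ring
end

section
/- Let N ∈ ℕ, T ≥ 0, L ≥ 0, α₁,…,α_N ≥ 0, and let u¹,…,u^N : [0,T] → [0,∞) be continuous functions satisfying, for all i and all t ∈ [0,T], u^i(t) ≤ α_i + L ∫₀ᵗ ( u^i(r) + N^{−1} ∑_{k=1}^N u^k(r) ) dr. Then, with ᾱ := N^{−1} ∑_{k=1}^N α_k, for all i and all t ∈ [0,T]: u^i(t) ≤ e^{LT} ( α_i + L T e^{2LT} ᾱ ); in particular u^i(t) ≤ (1 + LT e^{2LT}) e^{LT} (α_i + ᾱ). -/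
open MeasureTheory

/-- Integral form of Gronwall's inequality on `[0, T]`. -/
lemma gronwall_int_s17 {T a C : ℝ} (hT : 0 ≤ T) (ha : 0 ≤ a) (hC : 0 ≤ C) {u : ℝ → ℝ}
    (hcont : ContinuousOn u (Set.Icc 0 T))
    (hnn : ∀ t ∈ Set.Icc (0 : ℝ) T, 0 ≤ u t)
    (h : ∀ t ∈ Set.Icc (0 : ℝ) T, u t ≤ a + C * ∫ r in (0 : ℝ)..t, u r) :
    ∀ t ∈ Set.Icc (0 : ℝ) T, u t ≤ a * Real.exp (C * t) := by
  set F : ℝ → ℝ := fun t => ∫ r in (0 : ℝ)..t, u r with hFdef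
  have hInt : ∀ t ∈ Set.Icc (0 : ℝ) T, IntervalIntegrable u volume 0 t := by
    intro t ht
    have : ContinuousOn u (Set.uIcc 0 t) := by
      rw [Set.uIcc_of_le ht.1]
      exact hcont.mono (Set.Icc_subset_Icc le_rfl ht.2)
    exact this.intervalIntegrable
  have hFnn : ∀ t ∈ Set.Icc (0 : ℝ) T, 0 ≤ F t := by
    intro t ht
    exact intervalIntegral.integral_nonneg ht.1
      (fun r hr => hnn r ⟨hr.1, hr.2.trans ht.2⟩)
  have hFcont : ContinuousOn F (Set.Icc 0 T) := by
    have : Set.uIcc (0 : ℝ) T = Set.Icc 0 T := Set.uIcc_of_le hT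
    rw [← this]
    refine intervalIntegral.continuousOn_primitive_interval ?_
    rw [this]
    exact hcont.integrableOn_compact isCompact_Icc
  have hderiv : ∀ t ∈ Set.Ico (0 : ℝ) T, HasDerivWithinAt F (u t) (Set.Ici t) t := by
    intro t ht
    have hmem : Set.Icc (0 : ℝ) T ∈ nhdsWithin t (Set.Ioi t) := by
      refine mem_nhdsWithin.2 ⟨Set.Iio T, isOpen_Iio, ht.2, ?_⟩
      rintro x ⟨hx1, hx2⟩
      exact ⟨ht.1.trans (le_of_lt hx2), le_of_lt hx1⟩
    have hsm : StronglyMeasurableAtFilter u (nhdsWithin t (Set.Ioi t)) :=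
      ⟨Set.Icc 0 T, hmem, hcont.aestronglyMeasurable measurableSet_Icc⟩
    have hcw : ContinuousWithinAt u (Set.Ioi t) t :=
      (hcont.continuousWithinAt ⟨ht.1, ht.2.le⟩).mono_of_mem_nhdsWithin hmem
    exact intervalIntegral.integral_hasDerivWithinAt_right
      (hInt t ⟨ht.1, ht.2.le⟩) hsm hcw
  have hF0 : ‖F 0‖ ≤ 0 := by simp [hFdef]
  have bound : ∀ x ∈ Set.Ico (0 : ℝ) T, ‖u x‖ ≤ C * ‖F x‖ + a := by
    intro x hx
    have hx' : x ∈ Set.Icc (0 : ℝ) T := ⟨hx.1, hx.2.le⟩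
    rw [Real.norm_of_nonneg (hnn x hx'), Real.norm_of_nonneg (hFnn x hx')]
    have := h x hx'
    linarith
  have key := norm_le_gronwallBound_of_norm_deriv_right_le hFcont hderiv hF0 bound
  intro t ht
  have hk := key t ht
  rw [Real.norm_of_nonneg (hFnn t ht), sub_zero] at hk
  have h1 : u t ≤ a + C * F t := h t ht
  rcases eq_or_ne C 0 with hC0 | hC0
  · subst hC0
    simpa using h1
  · rw [gronwallBound_of_K_ne_0 hC0] at hk
    have : C * F t ≤ C * (0 * Real.exp (C * t) + a / C * (Real.exp (C * t) - 1)) :=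
      mul_le_mul_of_nonneg_left hk hC
    have heq : C * (0 * Real.exp (C * t) + a / C * (Real.exp (C * t) - 1))
        = a * Real.exp (C * t) - a := by field_simp; ring
    linarith [this, heq ▸ this]

/-- a Gronwall-type estimate for `N` coupled integral inequalities whose
coupling is through the average `N⁻¹ ∑_k u^k`. -/
theorem statement17 (N : ℕ) (hN : 0 < N) (T L : ℝ) (hT : 0 ≤ T) (hL : 0 ≤ L)
    (α : Fin N → ℝ) (hα : ∀ i, 0 ≤ α i)
    (u : Fin N → ℝ → ℝ)
    (hcont : ∀ i, ContinuousOn (u i) (Set.Icc 0 T))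
    (hnn : ∀ i, ∀ t ∈ Set.Icc (0 : ℝ) T, 0 ≤ u i t)
    (hineq : ∀ i, ∀ t ∈ Set.Icc (0 : ℝ) T,
      u i t ≤ α i + L * ∫ r in (0 : ℝ)..t, (u i r + (N : ℝ)⁻¹ * ∑ k, u k r)) :
    ∀ i, ∀ t ∈ Set.Icc (0 : ℝ) T,
      u i t ≤ Real.exp (L * T)
          * (α i + L * T * Real.exp (2 * L * T) * ((N : ℝ)⁻¹ * ∑ k, α k))
      ∧ u i t ≤ (1 + L * T * Real.exp (2 * L * T)) * Real.exp (L * T)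
          * (α i + (N : ℝ)⁻¹ * ∑ k, α k) := by
  set c : ℝ := (N : ℝ)⁻¹ with hc
  have hcpos : 0 < c := by
    rw [hc]; positivity
  have hcN : c * (N : ℝ) = 1 := by
    rw [hc]; field_simp
  set S : ℝ → ℝ := fun t => c * ∑ k, u k t with hSdef
  set abar : ℝ := c * ∑ k, α k with habar
  have habar_nn : 0 ≤ abar := by
    rw [habar]
    exact mul_nonneg hcpos.le (Finset.sum_nonneg fun k _ => hα k)
  have hScont : ContinuousOn S (Set.Icc 0 T) :=
    continuousOn_const.mul (continuousOn_finset_sum _ fun k _ => hcont k)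
  have hSnn : ∀ t ∈ Set.Icc (0 : ℝ) T, 0 ≤ S t := fun t ht =>
    mul_nonneg hcpos.le (Finset.sum_nonneg fun k _ => hnn k t ht)
  -- integrability helpers
  have hIu : ∀ i, ∀ t ∈ Set.Icc (0 : ℝ) T, IntervalIntegrable (u i) volume 0 t := by
    intro i t ht
    have : ContinuousOn (u i) (Set.uIcc 0 t) := by
      rw [Set.uIcc_of_le ht.1]
      exact (hcont i).mono (Set.Icc_subset_Icc le_rfl ht.2)
    exact this.intervalIntegrable
  have hIS : ∀ t ∈ Set.Icc (0 : ℝ) T, IntervalIntegrable S volume 0 t := by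
    intro t ht
    have : ContinuousOn S (Set.uIcc 0 t) := by
      rw [Set.uIcc_of_le ht.1]
      exact hScont.mono (Set.Icc_subset_Icc le_rfl ht.2)
    exact this.intervalIntegrable
  -- split inequality
  have hsplit : ∀ i, ∀ t ∈ Set.Icc (0 : ℝ) T,
      u i t ≤ α i + L * ((∫ r in (0:ℝ)..t, u i r) + ∫ r in (0:ℝ)..t, S r) := by
    intro i t ht
    have := hineq i t ht
    rwa [intervalIntegral.integral_add (hIu i t ht) (hIS t ht)] at this
  -- the average satisfies the Gronwall hypothesis with constant 2L
  have hSineq : ∀ t ∈ Set.Icc (0 : ℝ) T, S t ≤ abar + 2 * L * ∫ r in (0:ℝ)..t, S r := by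
    intro t ht
    have hsum : ∑ k, u k t ≤ ∑ k, (α k + L * ((∫ r in (0:ℝ)..t, u k r)
        + ∫ r in (0:ℝ)..t, S r)) :=
      Finset.sum_le_sum fun k _ => hsplit k t ht
    have hsumint : c * ∑ k, (∫ r in (0:ℝ)..t, u k r) = ∫ r in (0:ℝ)..t, S r := by
      simp only [hSdef]
      rw [intervalIntegral.integral_const_mul,
        intervalIntegral.integral_finset_sum (fun k _ => hIu k t ht)]
    have h1 : S t ≤ c * ∑ k, (α k + L * ((∫ r in (0:ℝ)..t, u k r)
        + ∫ r in (0:ℝ)..t, S r)) := mul_le_mul_of_nonneg_left hsum hcpos.le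
    have hsum2 : ∑ k, (α k + L * ((∫ r in (0:ℝ)..t, u k r) + ∫ r in (0:ℝ)..t, S r))
        = (∑ k, α k) + L * (∑ k, ∫ r in (0:ℝ)..t, u k r)
          + (N : ℝ) * (L * ∫ r in (0:ℝ)..t, S r) := by
      simp only [mul_add, Finset.sum_add_distrib, ← Finset.mul_sum, Finset.sum_const,
        Finset.card_univ, Fintype.card_fin, nsmul_eq_mul]
      ring
    have h4 : c * ((∑ k, α k) + L * (∑ k, ∫ r in (0:ℝ)..t, u k r)
          + (N : ℝ) * (L * ∫ r in (0:ℝ)..t, S r))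
        = abar + 2 * L * ∫ r in (0:ℝ)..t, S r := by
      rw [habar]
      linear_combination L * hsumint + (L * ∫ r in (0:ℝ)..t, S r) * hcN
    calc S t ≤ c * ∑ k, (α k + L * ((∫ r in (0:ℝ)..t, u k r)
          + ∫ r in (0:ℝ)..t, S r)) := h1
      _ = abar + 2 * L * ∫ r in (0:ℝ)..t, S r := by rw [hsum2, h4]
  have hSbound : ∀ t ∈ Set.Icc (0 : ℝ) T, S t ≤ abar * Real.exp (2 * L * T) := by
    intro t ht
    have := gronwall_int_s17 hT habar_nn (by positivity) hScont hSnn hSineq t ht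
    refine this.trans ?_
    exact mul_le_mul_of_nonneg_left
      (Real.exp_le_exp.2 (by nlinarith [ht.1, ht.2] : 2 * L * t ≤ 2 * L * T)) habar_nn
  -- each component
  intro i t ht
  set A : ℝ := α i + L * T * Real.exp (2 * L * T) * abar with hA
  have hAnn : 0 ≤ A := by
    rw [hA]
    have : 0 ≤ L * T * Real.exp (2 * L * T) := by positivity
    exact add_nonneg (hα i) (mul_nonneg this habar_nn)
  have huineq : ∀ s ∈ Set.Icc (0 : ℝ) T, u i s ≤ A + L * ∫ r in (0:ℝ)..s, u i r := by
    intro s hs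
    have h1 := hsplit i s hs
    have hconst : (∫ r in (0:ℝ)..s, S r) ≤ s * (abar * Real.exp (2 * L * T)) := by
      have h0 := intervalIntegral.integral_mono_on hs.1 (hIS s hs)
        (intervalIntegrable_const (c := abar * Real.exp (2 * L * T)))
        (fun r hr => hSbound r ⟨hr.1, hr.2.trans hs.2⟩)
      rw [intervalIntegral.integral_const, smul_eq_mul, sub_zero] at h0
      exact h0
    have hsT : s * (abar * Real.exp (2 * L * T)) ≤ T * (abar * Real.exp (2 * L * T)) :=
      mul_le_mul_of_nonneg_right hs.2
        (mul_nonneg habar_nn (Real.exp_pos _).le)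
    have : L * (∫ r in (0:ℝ)..s, S r) ≤ L * (T * (abar * Real.exp (2 * L * T))) :=
      mul_le_mul_of_nonneg_left (hconst.trans hsT) hL
    rw [hA]
    nlinarith [h1, this]
  have hfinal := gronwall_int_s17 hT hAnn hL (hcont i) (hnn i) huineq t ht
  have hfinal' : u i t ≤ A * Real.exp (L * T) := by
    refine hfinal.trans ?_
    exact mul_le_mul_of_nonneg_left
      (Real.exp_le_exp.2 (mul_le_mul_of_nonneg_left ht.2 hL)) hAnn
  constructor
  · calc u i t ≤ A * Real.exp (L * T) := hfinal'
      _ = Real.exp (L * T) * (α i + L * T * Real.exp (2 * L * T) * (c * ∑ k, α k)) := by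
        rw [hA, habar]; ring
  · have hx : 0 < Real.exp (L * T) := Real.exp_pos _
    have hy : 0 ≤ L * T * Real.exp (2 * L * T) := by positivity
    have hαi := hα i
    have hab : 0 ≤ c * ∑ k, α k := habar_nn
    calc u i t ≤ A * Real.exp (L * T) := hfinal'
      _ ≤ (1 + L * T * Real.exp (2 * L * T)) * Real.exp (L * T) * (α i + c * ∑ k, α k) := by
        rw [hA, habar]
        nlinarith [mul_nonneg hab hx.le, mul_nonneg (mul_nonneg hy hαi) hx.le]
end
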